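/- arXiv:2304.01462 — 4 statements merged into one kernel-verified Lean document; each statement's English description precedes it below -/
import Mathlib

section
/- For every integer r ≥ 0, the maximum loneliness of the speed tuple (8, 4r+3, 4r+11, 4r+19) equals (2r+7)/(4(2r+7)+2); that is, ML(8, 4r+3, 4r+11, 4r+19) = (2r+7)/(8r+30). -/
/-- Distance from a real number to the nearest integer. -/
noncomputable def distToInt (x : ℝ) : ℝ := ⨅ m : ℤ, |x - m|

/-- Maximum loneliness of a tuple of speeds. -/
noncomputable def ML {n : ℕ} (v : Fin n → ℤ) : ℝ :=
  ⨆ t : ℝ, ⨅ i : Fin n, distToInt (t * v i)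

lemma distToInt_le (x : ℝ) (n : ℤ) : distToInt x ≤ |x - n| :=
  ciInf_le ⟨0, by rintro y ⟨m, rfl⟩; exact abs_nonneg _⟩ n

lemma distToInt_nonneg (x : ℝ) : 0 ≤ distToInt x :=
  le_ciInf fun _ => abs_nonneg _

lemma distToInt_eq (x : ℝ) (n : ℤ) (h : |x - n| ≤ 1/2) : distToInt x = |x - n| := by
  refine le_antisymm (distToInt_le x n) (le_ciInf fun m => ?_)
  rcases eq_or_ne m n with rfl | hmn
  · exact le_refl _
  · have h1 : (1:ℝ) ≤ |(n:ℝ) - m| := by exact_mod_cast Int.one_le_abs (sub_ne_zero.2 hmn.symm)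
    have h2 : |(n:ℝ) - m| ≤ |x - m| + |x - n| := by
      have he : (n:ℝ) - m = (x - m) - (x - n) := by ring
      rw [he]; exact abs_sub _ _
    linarith

lemma distToInt_round (x : ℝ) : distToInt x = |x - round x| :=
  distToInt_eq x (round x) (abs_sub_round x)

lemma distToInt_le_half (x : ℝ) : distToInt x ≤ 1/2 :=
  (distToInt_round x) ▸ abs_sub_round x

lemma distToInt_add_int (x : ℝ) (n : ℤ) : distToInt (x + n) = distToInt x := by
  rw [distToInt_round, distToInt_round x, round_add_intCast]
  push_cast
  ring_nf

lemma coreA (r : ℕ) (K u y : ℝ) (j : ℤ)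
    (hK : K = (2*(r:ℝ)+7)/(8*(r:ℝ)+30))
    (hj : (j:ℝ) = 8*y - (4*(r:ℝ)+11)*u)
    (hu1 : K < u) (hu2 : u ≤ 1/2) (hy1 : K < y) (hy2 : y ≤ 1/2)
    (hd : K < |y - u|) : False := by
  have hr0 : (0:ℝ) ≤ (r:ℝ) := Nat.cast_nonneg r
  have hD : (0:ℝ) < 8*(r:ℝ)+30 := by positivity
  have hKD : K * (8*(r:ℝ)+30) = 2*(r:ℝ)+7 := by rw [hK]; field_simp
  rcases lt_abs.mp hd with hA | hB
  · have p1 : 0 < (4*(r:ℝ)+11)*(u - K) := mul_pos (by positivity) (sub_pos.2 hu1)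
    have p2 : 0 < (4*(r:ℝ)+3)*((1/2 - K) - u) := by
      apply mul_pos (by positivity); nlinarith
    have hup : (j:ℝ) < 2 - r := by nlinarith
    have hlo : 1 - (r:ℝ) < j := by nlinarith
    have hup' : j < 2 - (r:ℤ) := by exact_mod_cast (by push_cast; linarith : (j:ℝ) < ((2 - (r:ℤ) : ℤ) : ℝ))
    have hlo' : 1 - (r:ℤ) < j := by exact_mod_cast (by push_cast; linarith : (((1 - (r:ℤ)) : ℤ) : ℝ) < j)
    omega
  · have p1 : 0 < (4*(r:ℝ)+11)*(u - (y + K)) := by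
      apply mul_pos (by positivity); nlinarith
    have p2 : 0 < (4*(r:ℝ)+3)*(y - K) := mul_pos (by positivity) (sub_pos.2 hy1)
    have p3 : 0 ≤ (4*(r:ℝ)+11)*(1/2 - u) := mul_nonneg (by positivity) (by linarith)
    have hup : (j:ℝ) < -(2*(r:ℝ)+3) := by nlinarith
    have hlo : -(2*(r:ℝ)+4) < j := by nlinarith
    have hup' : j < -(2*(r:ℤ)+3) := by exact_mod_cast (by push_cast; linarith : (j:ℝ) < ((-(2*(r:ℤ)+3) : ℤ) : ℝ))
    have hlo' : -(2*(r:ℤ)+4) < j := by exact_mod_cast (by push_cast; linarith : (((-(2*(r:ℤ)+4)) : ℤ) : ℝ) < j)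
    omega

lemma coreB (r : ℕ) (K u y : ℝ) (j : ℤ)
    (hK : K = (2*(r:ℝ)+7)/(8*(r:ℝ)+30))
    (hj : (j:ℝ) = 8*y + (4*(r:ℝ)+11)*u)
    (hu1 : K < u) (hu2 : u ≤ 1/2) (hy1 : K < y) (hy2 : y ≤ 1/2)
    (hd : K < |y - u|) : False := by
  have hr0 : (0:ℝ) ≤ (r:ℝ) := Nat.cast_nonneg r
  have hD : (0:ℝ) < 8*(r:ℝ)+30 := by positivity
  have hKD : K * (8*(r:ℝ)+30) = 2*(r:ℝ)+7 := by rw [hK]; field_simp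
  rcases lt_abs.mp hd with hA | hB
  · have p1 : 0 < (4*(r:ℝ)+19)*(u - K) := mul_pos (by positivity) (sub_pos.2 hu1)
    have p2 : 0 < (4*(r:ℝ)+11)*((1/2 - K) - u) := by
      apply mul_pos (by positivity); nlinarith
    have hlo : (r:ℝ) + 6 < j := by nlinarith
    have hup : (j:ℝ) < (r:ℝ) + 7 := by nlinarith
    have hlo' : (r:ℤ) + 6 < j := by exact_mod_cast (by push_cast; linarith : (((r:ℤ) + 6 : ℤ) : ℝ) < j)
    have hup' : j < (r:ℤ) + 7 := by exact_mod_cast (by push_cast; linarith : (j:ℝ) < (((r:ℤ) + 7 : ℤ) : ℝ))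
    omega
  · have p1 : 0 < (4*(r:ℝ)+11)*(u - (y + K)) := by
      apply mul_pos (by positivity); nlinarith
    have p2 : 0 < (4*(r:ℝ)+19)*(y - K) := mul_pos (by positivity) (sub_pos.2 hy1)
    have p3 : 0 ≤ (4*(r:ℝ)+11)*(1/2 - u) := mul_nonneg (by positivity) (by linarith)
    have hlo : 2*(r:ℝ) + 7 < j := by nlinarith
    have hup : (j:ℝ) < 2*(r:ℝ) + 8 := by nlinarith
    have hlo' : 2*(r:ℤ) + 7 < j := by exact_mod_cast (by push_cast; linarith : ((2*(r:ℤ) + 7 : ℤ) : ℝ) < j)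
    have hup' : j < 2*(r:ℤ) + 8 := by exact_mod_cast (by push_cast; linarith : (j:ℝ) < ((2*(r:ℤ) + 8 : ℤ) : ℝ))
    omega

lemma fan_sun_upper (r : ℕ) (t : ℝ) :
    (⨅ i : Fin 4, distToInt (t * ((![8, 4*(r:ℤ)+3, 4*(r:ℤ)+11, 4*(r:ℤ)+19] : Fin 4 → ℤ) i : ℝ)))
      ≤ (2*(r:ℝ)+7)/(8*(r:ℝ)+30) := by
  set K : ℝ := (2*(r:ℝ)+7)/(8*(r:ℝ)+30) with hK
  by_contra hc
  push_neg at hc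
  have hKpos : 0 < K := by rw [hK]; positivity
  have hbdd : BddBelow (Set.range fun i : Fin 4 =>
      distToInt (t * ((![8, 4*(r:ℤ)+3, 4*(r:ℤ)+11, 4*(r:ℤ)+19] : Fin 4 → ℤ) i : ℝ))) :=
    ⟨0, by rintro x ⟨i, rfl⟩; exact distToInt_nonneg _⟩
  have h0 := lt_of_lt_of_le hc (ciInf_le hbdd 0)
  have h1 := lt_of_lt_of_le hc (ciInf_le hbdd 1)
  have h2 := lt_of_lt_of_le hc (ciInf_le hbdd 2)
  have h3 := lt_of_lt_of_le hc (ciInf_le hbdd 3)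
  have e0 : ((![8, 4*(r:ℤ)+3, 4*(r:ℤ)+11, 4*(r:ℤ)+19] : Fin 4 → ℤ) 0 : ℝ) = 8 := by norm_num
  have e1 : ((![8, 4*(r:ℤ)+3, 4*(r:ℤ)+11, 4*(r:ℤ)+19] : Fin 4 → ℤ) 1 : ℝ) = 4*(r:ℝ)+3 := by
    show ((4*(r:ℤ)+3 : ℤ) : ℝ) = _ ; push_cast; ring
  have e2 : ((![8, 4*(r:ℤ)+3, 4*(r:ℤ)+11, 4*(r:ℤ)+19] : Fin 4 → ℤ) 2 : ℝ) = 4*(r:ℝ)+11 := by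
    show ((4*(r:ℤ)+11 : ℤ) : ℝ) = _ ; push_cast; ring
  have e3 : ((![8, 4*(r:ℤ)+3, 4*(r:ℤ)+11, 4*(r:ℤ)+19] : Fin 4 → ℤ) 3 : ℝ) = 4*(r:ℝ)+19 := by
    show ((4*(r:ℤ)+19 : ℤ) : ℝ) = _ ; push_cast; ring
  rw [e0] at h0; rw [e1] at h1; rw [e2] at h2; rw [e3] at h3
  -- set up u0, b0
  set R8 : ℤ := round (t*8) with hR8
  set Rm : ℤ := round (t*(4*(r:ℝ)+11)) with hRm
  set u0 : ℝ := t*8 - (R8:ℝ) with hu0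
  set b0 : ℝ := t*(4*(r:ℝ)+11) - (Rm:ℝ) with hb0
  have hu0abs : |u0| ≤ 1/2 := by rw [hu0, hR8]; exact abs_sub_round _
  have hb0abs : |b0| ≤ 1/2 := by rw [hb0, hRm]; exact abs_sub_round _
  have h0' : K < |u0| := by rw [hu0, hR8]; rw [distToInt_round] at h0; exact h0
  have h2' : K < |b0| := by rw [hb0, hRm]; rw [distToInt_round] at h2; exact h2
  have hplus : K < distToInt (b0 + u0) := by
    have he : t*(4*(r:ℝ)+19) = (b0 + u0) + ((Rm + R8 : ℤ):ℝ) := by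
      rw [hu0, hb0]; push_cast; ring
    rw [he, distToInt_add_int] at h3; exact h3
  have hminus : K < distToInt (b0 - u0) := by
    have he : t*(4*(r:ℝ)+3) = (b0 - u0) + ((Rm - R8 : ℤ):ℝ) := by
      rw [hu0, hb0]; push_cast; ring
    rw [he, distToInt_add_int] at h1; exact h1
  have hu0le : u0 ≤ 1/2 := le_trans (le_abs_self _) hu0abs
  have hu0ge : -(1/2) ≤ u0 := neg_le_of_abs_le hu0abs
  have hb0le : b0 ≤ 1/2 := le_trans (le_abs_self _) hb0abs
  have hb0ge : -(1/2) ≤ b0 := neg_le_of_abs_le hb0abs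
  have hu0ne : u0 ≠ 0 := by intro h; rw [h, abs_zero] at h0'; linarith
  have hb0ne : b0 ≠ 0 := by intro h; rw [h, abs_zero] at h2'; linarith
  rcases hu0ne.lt_or_gt with hun | hup
  · rcases hb0ne.lt_or_gt with hbn | hbp
    · -- u0 < 0, b0 < 0 : coreA with u := -u0, y := -b0
      have hu1 : K < -u0 := by rwa [abs_of_neg hun] at h0'
      have hy1 : K < -b0 := by rwa [abs_of_neg hbn] at h2'
      have habs : |b0 - u0| ≤ 1/2 := by
        rw [abs_le]; constructor <;> linarith
      have hdv : distToInt (b0 - u0) = |b0 - u0| := by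
        have := distToInt_eq (b0 - u0) 0 (by rw [Int.cast_zero, sub_zero]; exact habs)
        rwa [Int.cast_zero, sub_zero] at this
      refine coreA r K (-u0) (-b0) (8*Rm - (4*(r:ℤ)+11)*R8) hK ?_ hu1 (by linarith) hy1 (by linarith) ?_
      · rw [hu0, hb0]; push_cast; ring
      · rw [hdv] at hminus
        have : |(-b0) - (-u0)| = |b0 - u0| := by rw [abs_sub_comm]; congr 1; ring
        rw [this]; exact hminus
    · -- u0 < 0, b0 > 0 : coreB with u := -u0, y := b0
      have hu1 : K < -u0 := by rwa [abs_of_neg hun] at h0'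
      have hy1 : K < b0 := by rwa [abs_of_pos hbp] at h2'
      have habs : |b0 + u0| ≤ 1/2 := by
        rw [abs_le]; constructor <;> linarith
      have hdv : distToInt (b0 + u0) = |b0 + u0| := by
        have := distToInt_eq (b0 + u0) 0 (by rw [Int.cast_zero, sub_zero]; exact habs)
        rwa [Int.cast_zero, sub_zero] at this
      refine coreB r K (-u0) b0 ((4*(r:ℤ)+11)*R8 - 8*Rm) hK ?_ hu1 (by linarith) hy1 (by linarith) ?_
      · rw [hu0, hb0]; push_cast; ring
      · rw [hdv] at hplus
        have : |b0 - (-u0)| = |b0 + u0| := by congr 1; ring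
        rw [this]; exact hplus
  · rcases hb0ne.lt_or_gt with hbn | hbp
    · -- u0 > 0, b0 < 0 : coreB with u := u0, y := -b0
      have hu1 : K < u0 := by rwa [abs_of_pos hup] at h0'
      have hy1 : K < -b0 := by rwa [abs_of_neg hbn] at h2'
      have habs : |b0 + u0| ≤ 1/2 := by
        rw [abs_le]; constructor <;> linarith
      have hdv : distToInt (b0 + u0) = |b0 + u0| := by
        have := distToInt_eq (b0 + u0) 0 (by rw [Int.cast_zero, sub_zero]; exact habs)
        rwa [Int.cast_zero, sub_zero] at this
      refine coreB r K u0 (-b0) (8*Rm - (4*(r:ℤ)+11)*R8) hK ?_ hu1 (by linarith) hy1 (by linarith) ?_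
      · rw [hu0, hb0]; push_cast; ring
      · rw [hdv] at hplus
        have : |(-b0) - u0| = |b0 + u0| := by rw [← abs_neg]; congr 1; ring
        rw [this]; exact hplus
    · -- u0 > 0, b0 > 0 : coreA with u := u0, y := b0
      have hu1 : K < u0 := by rwa [abs_of_pos hup] at h0'
      have hy1 : K < b0 := by rwa [abs_of_pos hbp] at h2'
      have habs : |b0 - u0| ≤ 1/2 := by
        rw [abs_le]; constructor <;> linarith
      have hdv : distToInt (b0 - u0) = |b0 - u0| := by
        have := distToInt_eq (b0 - u0) 0 (by rw [Int.cast_zero, sub_zero]; exact habs)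
        rwa [Int.cast_zero, sub_zero] at this
      refine coreA r K u0 b0 ((4*(r:ℤ)+11)*R8 - 8*Rm) hK ?_ hu1 (by linarith) hy1 (by linarith) ?_
      · rw [hu0, hb0]; push_cast; ring
      · rw [hdv] at hminus; exact hminus

lemma distToInt_ge (x : ℝ) (n : ℤ) (c K : ℝ) (h : x - n = c)
    (h1 : |c| ≤ 1/2) (h2 : K ≤ |c|) : K ≤ distToInt x := by
  rw [distToInt_eq x n (by rw [h]; exact h1), h]; exact h2

lemma fan_sun_lower (r : ℕ) :
    (2*(r:ℝ)+7)/(8*(r:ℝ)+30) ≤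
    ⨅ i : Fin 4, distToInt (((13 - 4*(r:ℝ) - 2*(r:ℝ)^2)/(8*(r:ℝ)+30)) *
      ((![8, 4*(r:ℤ)+3, 4*(r:ℤ)+11, 4*(r:ℤ)+19] : Fin 4 → ℤ) i : ℝ)) := by
  have hr0 : (0:ℝ) ≤ (r:ℝ) := Nat.cast_nonneg r
  have hD : (0:ℝ) < 8*(r:ℝ)+30 := by positivity
  have hDne : (8*(r:ℝ)+30) ≠ 0 := ne_of_gt hD
  set t0 : ℝ := (13 - 4*(r:ℝ) - 2*(r:ℝ)^2)/(8*(r:ℝ)+30) with ht0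
  refine le_ciInf fun i => ?_
  fin_cases i
  · refine distToInt_ge _ (3 - 2*(r:ℤ)) ((4*(r:ℝ)+14)/(8*(r:ℝ)+30)) _ ?_ ?_ ?_
    · show t0 * ((8:ℤ):ℝ) - _ = _
      rw [ht0]; push_cast; field_simp; ring
    · rw [abs_of_nonneg (by positivity), div_le_iff₀ hD]; linarith
    · rw [abs_of_nonneg (by positivity)]; gcongr <;> norm_num
  · refine distToInt_ge _ (-(r:ℤ)^2 + r + 1) ((2*(r:ℝ)+9)/(8*(r:ℝ)+30)) _ ?_ ?_ ?_
    · show t0 * ((4*(r:ℤ)+3:ℤ):ℝ) - _ = _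
      rw [ht0]; push_cast; field_simp; ring
    · rw [abs_of_nonneg (by positivity), div_le_iff₀ hD]; linarith
    · rw [abs_of_nonneg (by positivity)]; gcongr <;> norm_num
  · refine distToInt_ge _ (-(r:ℤ)^2 - r + 5) (-((2*(r:ℝ)+7)/(8*(r:ℝ)+30))) _ ?_ ?_ ?_
    · show t0 * ((4*(r:ℤ)+11:ℤ):ℝ) - _ = _
      rw [ht0]; push_cast; field_simp; ring
    · rw [abs_neg, abs_of_nonneg (by positivity), div_le_iff₀ hD]; linarith
    · rw [abs_neg, abs_of_nonneg (by positivity)]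
  · refine distToInt_ge _ (-(r:ℤ)^2 - 3*r + 8) ((2*(r:ℝ)+7)/(8*(r:ℝ)+30)) _ ?_ ?_ ?_
    · show t0 * ((4*(r:ℤ)+19:ℤ):ℝ) - _ = _
      rw [ht0]; push_cast; field_simp; ring
    · rw [abs_of_nonneg (by positivity), div_le_iff₀ hD]; linarith
    · rw [abs_of_nonneg (by positivity)]


theorem fan_sun_family (r : ℕ) :
    ML ![8, 4 * (r : ℤ) + 3, 4 * (r : ℤ) + 11, 4 * (r : ℤ) + 19]
      = (2 * (r : ℝ) + 7) / (8 * (r : ℝ) + 30) := by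
  unfold ML
  apply le_antisymm
  · exact Real.iSup_le (fun t => fan_sun_upper r t) (by positivity)
  · have hbdd : BddAbove (Set.range fun t : ℝ => ⨅ i : Fin 4,
        distToInt (t * ((![8, 4*(r:ℤ)+3, 4*(r:ℤ)+11, 4*(r:ℤ)+19] : Fin 4 → ℤ) i : ℝ))) := by
      refine ⟨1/2, ?_⟩
      rintro x ⟨t, rfl⟩
      exact le_trans (ciInf_le ⟨0, by rintro y ⟨i, rfl⟩; exact distToInt_nonneg _⟩ 0)
        (distToInt_le_half _)
    exact le_trans (fan_sun_lower r) (le_ciSup hbdd _)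
end

section
/- Let V > 0 and let k ≤ n be positive integers. There are only finitely many k-dimensional subtori of (ℝ/ℤ)ⁿ with k-dimensional volume at most V. Equivalently, there are only finitely many rank-k primitive sublattices Λ ⊆ ℤⁿ with covolume (in the subspace they span) at most V. -/
/-- The covolume of the lattice spanned by the integer vectors `b 0, ..., b (k-1)`,
namely the square root of the Gram determinant. -/
noncomputable def latticeCovol {n k : ℕ} (b : Fin k → (Fin n → ℤ)) : ℝ :=
  Real.sqrt (Matrix.det (Matrix.of fun i j : Fin k => ((∑ l, b i l * b j l : ℤ) : ℝ)))

open Matrix Finset in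
theorem det_mul_expand {k n : ℕ} {R : Type*} [CommRing R]
    (A : Matrix (Fin k) (Fin n) R) (B : Matrix (Fin n) (Fin k) R) :
    (A * B).det = ∑ f : Fin k → Fin n, (∏ i, B (f i) i) * (A.submatrix id f).det := by
  rw [Matrix.det_apply']
  have key : ∀ σ : Equiv.Perm (Fin k),
      (∏ i, (A * B) (σ i) i) = ∑ f : Fin k → Fin n,
        (∏ i, A (σ i) (f i)) * (∏ i, B (f i) i) := by
    intro σ
    simp_rw [Matrix.mul_apply]
    rw [Finset.prod_univ_sum (fun _ => (univ : Finset (Fin n)))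
      (fun i l => A (σ i) l * B l i), Fintype.piFinset_univ]
    refine Finset.sum_congr rfl fun f _ => ?_
    rw [Finset.prod_mul_distrib]
  simp_rw [key, Finset.mul_sum]
  rw [Finset.sum_comm]
  refine Finset.sum_congr rfl fun f _ => ?_
  rw [Matrix.det_apply', Finset.mul_sum]
  refine Finset.sum_congr rfl fun σ _ => ?_
  simp only [Matrix.submatrix_apply, id_eq]
  ring

open Matrix Finset in
theorem exists_perm_factor {k n : ℕ} {S : Finset (Fin n)} (h : S.card = k)
    {f : Fin k → Fin n} (hf : Finset.univ.image f = S) :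
    ∃ σ : Equiv.Perm (Fin k), f = ⇑(S.orderEmbOfFin h) ∘ σ := by
  have hcard : (Finset.univ.image f).card = (Finset.univ : Finset (Fin k)).card := by
    rw [hf, h, Finset.card_univ, Fintype.card_fin]
  have hinj : Function.Injective f := by
    have := Finset.card_image_iff.mp hcard
    intro a b hab
    exact this (Finset.mem_coe.mpr (Finset.mem_univ a)) (Finset.mem_coe.mpr (Finset.mem_univ b)) hab
  have hmem : ∀ i, f i ∈ S := by
    intro i; rw [← hf]; exact Finset.mem_image_of_mem f (Finset.mem_univ i)
  let f' : Fin k → {x // x ∈ S} := fun i => ⟨f i, hmem i⟩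
  have hf'inj : Function.Injective f' := fun a b hab => hinj (congrArg Subtype.val hab)
  have hbij : Function.Bijective f' := by
    rw [Fintype.bijective_iff_injective_and_card]
    refine ⟨hf'inj, by simp [Fintype.card_coe, h]⟩
  refine ⟨(Equiv.ofBijective f' hbij).trans (S.orderIsoOfFin h).symm.toEquiv, ?_⟩
  funext i
  simp only [Function.comp_apply, Equiv.trans_apply, OrderIso.toEquiv_symm]
  have key : ∀ x : {y // y ∈ S}, (S.orderEmbOfFin h) ((S.orderIsoOfFin h).symm x) = (x : Fin n) := by
    intro x
    have := (S.orderIsoOfFin h).apply_symm_apply x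
    have h2 := congrArg Subtype.val this
    rw [← h2]; rfl
  exact (key (f' i)).symm
open Matrix Finset in
theorem fiber_sum_eq {k n : ℕ} (A : Matrix (Fin k) (Fin n) ℤ) (S : Finset (Fin n)) :
    ∑ f ∈ Finset.univ.filter (fun f : Fin k → Fin n => Finset.univ.image f = S),
        (∏ i, A i (f i)) * (A.submatrix id f).det
      = (if h : S.card = k then (A.submatrix id ⇑(S.orderEmbOfFin h)).det else 0) ^ 2 := by
  by_cases h : S.card = k
  · rw [dif_pos h]
    set e := S.orderEmbOfFin h with he
    set N := A.submatrix id ⇑e with hN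
    have himg : Finset.univ.image ⇑e = S := by
      apply Finset.coe_injective
      rw [Finset.coe_image, Finset.coe_univ, Set.image_univ, Finset.range_orderEmbOfFin]
    have hdet : ∀ σ : Equiv.Perm (Fin k),
        (A.submatrix id (⇑e ∘ ⇑σ)).det = (Equiv.Perm.sign σ : ℤ) * N.det := by
      intro σ
      rw [show A.submatrix id (⇑e ∘ ⇑σ) = N.submatrix id ⇑σ by
        rw [hN, Matrix.submatrix_submatrix]; rfl]
      rw [Matrix.det_permute']
      norm_num
    have hbij := Finset.sum_bij
      (s := (Finset.univ : Finset (Equiv.Perm (Fin k))))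
      (t := Finset.univ.filter (fun f : Fin k → Fin n => Finset.univ.image f = S))
      (f := fun σ => (∏ i, A i (e (σ i))) * ((Equiv.Perm.sign σ : ℤ) * N.det))
      (g := fun f => (∏ i, A i (f i)) * (A.submatrix id f).det)
      (i := fun σ _ => ⇑e ∘ ⇑σ)
      (by
        intro σ _
        rw [Finset.mem_filter]
        refine ⟨Finset.mem_univ _, ?_⟩
        rw [show Finset.univ.image (⇑e ∘ ⇑σ) = (Finset.univ.image ⇑σ).image ⇑e from
          (Finset.image_image).symm]
        rw [Finset.image_univ_equiv, himg])
      (by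
        intro σ₁ _ σ₂ _ hcomp
        apply Equiv.ext
        intro i
        exact e.injective (congrFun hcomp i))
      (by
        intro f hf
        rw [Finset.mem_filter] at hf
        obtain ⟨σ, hσ⟩ := exists_perm_factor h hf.2
        exact ⟨σ, Finset.mem_univ _, hσ.symm⟩)
      (by
        intro σ _
        simp only [Function.comp_apply]
        rw [hdet σ])
    rw [← hbij]
    have : ∀ σ : Equiv.Perm (Fin k),
        (∏ i, A i (e (σ i))) * ((Equiv.Perm.sign σ : ℤ) * N.det)
          = N.det * ((Equiv.Perm.sign σ : ℤ) * ∏ i, Nᵀ (σ i) i) := by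
      intro σ
      simp only [Matrix.transpose_apply, hN, Matrix.submatrix_apply, id_eq]
      ring
    simp_rw [this]
    rw [← Finset.mul_sum]
    have : ∑ σ : Equiv.Perm (Fin k), (Equiv.Perm.sign σ : ℤ) * ∏ i, Nᵀ (σ i) i = Nᵀ.det := by
      rw [Matrix.det_apply']
      norm_num
    rw [this, Matrix.det_transpose, sq]
  · rw [dif_neg h]
    rw [pow_two, mul_zero]
    apply Finset.sum_eq_zero
    intro f hf
    rw [Finset.mem_filter] at hf
    have hninj : ¬ Function.Injective f := by
      intro hinj
      apply h
      rw [← hf.2, Finset.card_image_of_injective _ hinj, Finset.card_univ, Fintype.card_fin]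
    rw [Function.not_injective_iff] at hninj
    obtain ⟨a, b, hab, hne⟩ := hninj
    have : (A.submatrix id f).det = 0 := by
      apply Matrix.det_zero_of_column_eq hne
      intro r
      simp [Matrix.submatrix_apply, hab]
    rw [this, mul_zero]

open Matrix Finset in
theorem det_mul_transpose_eq_sum_sq {k n : ℕ} (A : Matrix (Fin k) (Fin n) ℤ) :
    (A * Aᵀ).det = ∑ S : Finset (Fin n),
      (if h : S.card = k then (A.submatrix id ⇑(S.orderEmbOfFin h)).det else 0) ^ 2 := by
  rw [det_mul_expand]
  have : ∀ f : Fin k → Fin n, (∏ i, Aᵀ (f i) i) = ∏ i, A i (f i) := fun f => rfl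
  simp_rw [this]
  rw [← Finset.sum_fiberwise Finset.univ (fun f : Fin k → Fin n => Finset.univ.image f)
    (fun f => (∏ i, A i (f i)) * (A.submatrix id f).det)]
  exact Finset.sum_congr rfl fun S _ => fiber_sum_eq A S
open Matrix Finset in
theorem gram_det_nonneg {k n : ℕ} (A : Matrix (Fin k) (Fin n) ℤ) :
    0 ≤ (A * Aᵀ).det := by
  rw [det_mul_transpose_eq_sum_sq]
  exact Finset.sum_nonneg fun S _ => sq_nonneg _

open Matrix Finset in
theorem minor_sq_le_gram_det {k n : ℕ} (A : Matrix (Fin k) (Fin n) ℤ)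
    (g : Fin k → Fin n) : (A.submatrix id g).det ^ 2 ≤ (A * Aᵀ).det := by
  by_cases hinj : Function.Injective g
  · set S := Finset.univ.image g with hS
    have hcard : S.card = k := by
      rw [hS, Finset.card_image_of_injective _ hinj, Finset.card_univ, Fintype.card_fin]
    obtain ⟨σ, hσ⟩ := exists_perm_factor hcard (f := g) rfl
    have hdet : (A.submatrix id g).det
        = (Equiv.Perm.sign σ : ℤ) * (A.submatrix id ⇑(S.orderEmbOfFin hcard)).det := by
      rw [hσ, show A.submatrix id (⇑(S.orderEmbOfFin hcard) ∘ ⇑σ)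
          = (A.submatrix id ⇑(S.orderEmbOfFin hcard)).submatrix id ⇑σ by
        rw [Matrix.submatrix_submatrix]; rfl]
      rw [Matrix.det_permute']
      norm_num
    have hsq : (A.submatrix id g).det ^ 2
        = (A.submatrix id ⇑(S.orderEmbOfFin hcard)).det ^ 2 := by
      rw [hdet, mul_pow]
      rcases Int.units_eq_one_or (Equiv.Perm.sign σ) with h | h <;> rw [h] <;> norm_num
    rw [hsq, det_mul_transpose_eq_sum_sq]
    have := Finset.single_le_sum
      (f := fun S' : Finset (Fin n) =>
        (if h : S'.card = k then (A.submatrix id ⇑(S'.orderEmbOfFin h)).det else 0) ^ 2)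
      (fun S' _ => sq_nonneg _) (Finset.mem_univ S)
    simp only [dif_pos hcard] at this
    exact this
  · rw [Function.not_injective_iff] at hinj
    obtain ⟨a, b, hab, hne⟩ := hinj
    have : (A.submatrix id g).det = 0 := by
      apply Matrix.det_zero_of_column_eq hne
      intro r
      simp [Matrix.submatrix_apply, hab]
    rw [this]
    simpa using gram_det_nonneg A

open Matrix Finset in
theorem exists_minor_ne_zero_of_det_ne_zero {k n : ℕ} (A : Matrix (Fin k) (Fin n) ℤ)
    (hA : (A * Aᵀ).det ≠ 0) :
    ∃ g : Fin k → Fin n, (A.submatrix id g).det ≠ 0 := by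
  by_contra hcon
  push_neg at hcon
  apply hA
  rw [det_mul_expand]
  exact Finset.sum_eq_zero fun f _ => by rw [hcon f, mul_zero]
/-- Coordinatewise cast `ℤⁿ → ℚⁿ` as a `ℤ`-linear map. -/
def castLM (n : ℕ) : (Fin n → ℤ) →ₗ[ℤ] (Fin n → ℚ) where
  toFun x := fun j => (x j : ℚ)
  map_add' x y := by funext j; simp
  map_smul' m x := by
    funext j
    simp only [Pi.smul_apply, smul_eq_mul, RingHom.id_apply]
    push_cast
    rw [zsmul_eq_mul]

theorem castLM_injective (n : ℕ) : Function.Injective (castLM n) := by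
  intro x y h
  funext j
  have h2 : ((x j : ℚ)) = (y j : ℚ) := congrFun h j
  exact_mod_cast h2

theorem liQ {k n : ℕ} {b : Fin k → (Fin n → ℤ)} (hb : LinearIndependent ℤ b) :
    LinearIndependent ℚ (fun i => (castLM n) (b i)) := by
  rw [Fintype.linearIndependent_iff]
  intro c hc
  obtain ⟨m, hm⟩ := IsLocalization.exist_integer_multiples_of_finite (nonZeroDivisors ℤ) c
  choose z hz using hm
  have hmne : ((m : ℤ) : ℚ) ≠ 0 := by
    exact_mod_cast nonZeroDivisors.coe_ne_zero m
  have hzsum : ∑ i, z i • b i = 0 := by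
    apply castLM_injective n
    rw [map_sum, map_zero]
    have : ∀ i, (castLM n) (z i • b i) = ((z i : ℚ)) • (castLM n) (b i) := by
      intro i
      rw [map_smul, Int.cast_smul_eq_zsmul]
    simp_rw [this]
    have hzq : ∀ i, ((z i : ℚ)) = ((m : ℤ) : ℚ) * c i := by
      intro i
      have := hz i
      simpa [Algebra.smul_def] using this
    simp_rw [hzq, mul_smul (α := ℚ)]
    rw [← Finset.smul_sum, hc, smul_zero]
  have hz0 := Fintype.linearIndependent_iff.mp hb z hzsum
  intro i
  have : ((z i : ℚ)) = ((m : ℤ) : ℚ) * c i := by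
    have := hz i
    simpa [Algebra.smul_def] using this
  rw [hz0 i] at this
  simp only [Int.cast_zero] at this
  exact (mul_eq_zero.mp this.symm).resolve_left hmne

open Matrix in
theorem gram_det_ne_zero {k n : ℕ} {b : Fin k → (Fin n → ℤ)} (hb : LinearIndependent ℤ b) :
    (Matrix.of b * (Matrix.of b)ᵀ).det ≠ 0 := by
  set A : Matrix (Fin k) (Fin n) ℤ := Matrix.of b
  set Aq : Matrix (Fin k) (Fin n) ℚ := A.map (Int.cast) with hAq
  -- cast the determinant to ℚ
  intro hdet
  have hcast : (Aq * Aqᵀ).det = (((A * Aᵀ).det : ℤ) : ℚ) := by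
    rw [show (((A * Aᵀ).det : ℤ) : ℚ) = (Int.castRingHom ℚ) (A * Aᵀ).det from rfl,
      RingHom.map_det (Int.castRingHom ℚ)]
    congr 1
    rw [RingHom.mapMatrix_apply]
    rw [show (A * Aᵀ).map ⇑(Int.castRingHom ℚ) = A.map ⇑(Int.castRingHom ℚ) *
      Aᵀ.map ⇑(Int.castRingHom ℚ) from Matrix.map_mul]
    rw [Matrix.transpose_map]
    rfl
  have hq : (Aq * Aqᵀ).det = 0 := by rw [hcast, hdet, Int.cast_zero]
  obtain ⟨v, hv, hvmul⟩ := Matrix.exists_vecMul_eq_zero_iff.mpr hq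
  -- y := v ᵥ* Aq satisfies y ⬝ᵥ y = 0
  set y : Fin n → ℚ := v ᵥ* Aq with hy
  have hAy : Aq *ᵥ y = 0 := by
    rw [hy, ← Matrix.vecMul_transpose, Matrix.vecMul_vecMul, hvmul]
  have hyy : y ⬝ᵥ y = 0 := by
    calc y ⬝ᵥ y = v ᵥ* Aq ⬝ᵥ y := by rw [← hy]
    _ = v ⬝ᵥ (Aq *ᵥ y) := (Matrix.dotProduct_mulVec v Aq y).symm
    _ = 0 := by rw [hAy, dotProduct_zero]
  have hy0 : y = 0 := dotProduct_self_eq_zero.mp hyy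
  -- contradiction with linear independence
  have hli := liQ hb
  rw [Fintype.linearIndependent_iff] at hli
  apply hv
  funext i
  apply hli v _ i
  funext j
  have := congrFun hy0 j
  simp only [hy, Matrix.vecMul, dotProduct, Pi.zero_apply] at this ⊢
  rw [Finset.sum_apply]
  simpa [Aq, A, Matrix.map_apply, mul_comm, castLM] using this
open Matrix in
theorem rows_le_span {k n : ℕ} (A A' : Matrix (Fin k) (Fin n) ℚ) (g₀ : Fin k → Fin n)
    (hd : (A.submatrix id g₀).det ≠ 0)
    (hmin : ∀ g : Fin k → Fin n, (A.submatrix id g).det = (A'.submatrix id g).det) :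
    Submodule.span ℚ (Set.range A) ≤ Submodule.span ℚ (Set.range A') := by
  set d : ℚ := (A.submatrix id g₀).det with hdd
  set B : Matrix (Fin k) (Fin k) ℚ := A.submatrix id g₀ with hB
  set B' : Matrix (Fin k) (Fin k) ℚ := A'.submatrix id g₀ with hB'
  set N : Matrix (Fin k) (Fin n) ℚ :=
    Matrix.of (fun i j => (A.submatrix id (Function.update g₀ i j)).det) with hN
  have hd' : B'.det = d := (hmin g₀).symm
  -- the two Cramer identities
  have key : ∀ (C : Matrix (Fin k) (Fin n) ℚ),
      (∀ i j, N i j = (C.submatrix id (Function.update g₀ i j)).det) →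
      (C.submatrix id g₀) * N = (C.submatrix id g₀).det • C := by
    intro C hNC
    ext r j
    have hcol : (fun i => N i j) = (C.submatrix id g₀).cramer (fun r => C r j) := by
      funext i
      rw [hNC i j, Matrix.cramer_apply]
      congr 1
      ext r' c
      rw [Matrix.updateCol_apply, Matrix.submatrix_apply, Matrix.submatrix_apply]
      by_cases hc : c = i <;> simp [hc, Function.update_apply]
    have hmv : ((C.submatrix id g₀) * N) r j
        = ((C.submatrix id g₀) *ᵥ (fun i => N i j)) r := by
      simp [Matrix.mul_apply, Matrix.mulVec, dotProduct]
    rw [hmv, hcol, Matrix.mulVec_cramer]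
    simp
  have key1 : B * N = d • A := by
    rw [hB, hdd]
    exact key A (fun i j => rfl)
  have key2 : B' * N = d • A' := by
    rw [hB', ← hd']
    exact key A' (fun i j => hmin _)
  -- every vector of the form z ᵥ* N lies in the span of the rows of A'
  have hBu : IsUnit B'.det := by rw [hd']; exact isUnit_iff_ne_zero.mpr hd
  have key3 : ∀ z : Fin k → ℚ, z ᵥ* N ∈ Submodule.span ℚ (Set.range A') := by
    intro z
    have hz : z = (z ᵥ* B'⁻¹) ᵥ* B' := by
      rw [Matrix.vecMul_vecMul, Matrix.nonsing_inv_mul _ hBu, Matrix.vecMul_one]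
    rw [hz, Matrix.vecMul_vecMul, key2]
    have : (z ᵥ* B'⁻¹) ᵥ* (d • A') = d • ((z ᵥ* B'⁻¹) ᵥ* A') := by
      funext j
      simp only [Matrix.vecMul, dotProduct, Pi.smul_apply, Matrix.smul_apply,
        smul_eq_mul, Finset.mul_sum]
      exact Finset.sum_congr rfl fun i _ => by ring
    rw [this]
    apply Submodule.smul_mem
    change _ ∈ Submodule.span ℚ (Set.range A'.row)
    rw [← range_vecMulLinear]
    exact ⟨z ᵥ* B'⁻¹, rfl⟩
  -- conclude
  rw [Submodule.span_le]
  rintro _ ⟨r, rfl⟩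
  have hrow : B r ᵥ* N = d • A r := by
    funext j
    have := congrFun (congrFun key1 r) j
    simpa [Matrix.mul_apply, Matrix.vecMul, dotProduct] using this
  have : A r = d⁻¹ • (B r ᵥ* N) := by
    rw [hrow, smul_smul, inv_mul_cancel₀ hd, one_smul]
  rw [this]
  exact Submodule.smul_mem _ _ (key3 (B r))

theorem prim_le {k n : ℕ} (b b' : Fin k → (Fin n → ℤ)) (Λ₂ : Submodule ℤ (Fin n → ℤ))
    (hspan' : Submodule.span ℤ (Set.range b') = Λ₂)
    (hprim : ∀ (x : Fin n → ℤ) (m : ℤ), m ≠ 0 → m • x ∈ Λ₂ → x ∈ Λ₂)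
    (hQ : Submodule.span ℚ (Set.range (fun i => castLM n (b i)))
        ≤ Submodule.span ℚ (Set.range (fun i => castLM n (b' i)))) :
    Submodule.span ℤ (Set.range b) ≤ Λ₂ := by
  rw [Submodule.span_le]
  rintro _ ⟨i, rfl⟩
  have h1 : castLM n (b i) ∈ Submodule.span ℚ (Set.range fun i => castLM n (b' i)) :=
    hQ (Submodule.subset_span ⟨i, rfl⟩)
  obtain ⟨c, hc⟩ := (Submodule.mem_span_range_iff_exists_fun ℚ).mp h1
  obtain ⟨m, hm⟩ := IsLocalization.exist_integer_multiples_of_finite (nonZeroDivisors ℤ) c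
  choose z hz using hm
  have hzq : ∀ j, ((z j : ℚ)) = ((m : ℤ) : ℚ) * c j := by
    intro j
    have := hz j
    simpa [Algebra.smul_def] using this
  have key : (m : ℤ) • (b i) = ∑ j, z j • b' j := by
    apply castLM_injective n
    rw [map_smul, map_sum]
    rw [← Int.cast_smul_eq_zsmul ℚ]
    rw [← hc, Finset.smul_sum]
    refine Finset.sum_congr rfl fun j _ => ?_
    rw [map_smul, ← Int.cast_smul_eq_zsmul ℚ, hzq j, smul_smul]
  have hmem : (m : ℤ) • b i ∈ Λ₂ := by
    rw [key, ← hspan']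
    exact Submodule.sum_mem _ fun j _ =>
      Submodule.smul_mem _ _ (Submodule.subset_span ⟨j, rfl⟩)
  exact hprim _ _ (nonZeroDivisors.coe_ne_zero m) hmem

open Matrix in
theorem latticeCovol_eq {n k : ℕ} (b : Fin k → (Fin n → ℤ)) :
    latticeCovol b = Real.sqrt (((Matrix.of b * (Matrix.of b)ᵀ).det : ℤ) : ℝ) := by
  unfold latticeCovol
  congr 1
  rw [show ((((Matrix.of b * (Matrix.of b)ᵀ).det : ℤ)) : ℝ)
      = (Int.castRingHom ℝ) (Matrix.of b * (Matrix.of b)ᵀ).det from rfl,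
    RingHom.map_det]
  congr 1

open Matrix in
theorem minor_abs_le {n k : ℕ} {b : Fin k → (Fin n → ℤ)} {V : ℝ} (hV : 0 ≤ V)
    (hcov : latticeCovol b ≤ V) (g : Fin k → Fin n) :
    |((Matrix.of b).submatrix id g).det| ≤ ⌈V⌉ := by
  set D : ℤ := (Matrix.of b * (Matrix.of b)ᵀ).det with hD
  have hD0 : 0 ≤ D := gram_det_nonneg _
  have hD0' : (0 : ℝ) ≤ (D : ℝ) := by exact_mod_cast hD0
  have hDle : (D : ℝ) ≤ V ^ 2 := by
    rw [latticeCovol_eq] at hcov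
    calc (D : ℝ) = Real.sqrt (D : ℝ) ^ 2 := (Real.sq_sqrt hD0').symm
    _ ≤ V ^ 2 := by
      apply pow_le_pow_left₀ (Real.sqrt_nonneg _) hcov
  set m : ℤ := ((Matrix.of b).submatrix id g).det with hm
  have hsq : m ^ 2 ≤ D := minor_sq_le_gram_det _ g
  have hreal : ((m : ℝ)) ^ 2 ≤ V ^ 2 := by
    calc ((m : ℝ)) ^ 2 = ((m ^ 2 : ℤ) : ℝ) := by push_cast; ring
    _ ≤ (D : ℝ) := by exact_mod_cast hsq
    _ ≤ V ^ 2 := hDle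
  have habs : |(m : ℝ)| ≤ V := by
    calc |(m : ℝ)| = Real.sqrt ((m : ℝ) ^ 2) := (Real.sqrt_sq_eq_abs _).symm
    _ ≤ Real.sqrt (V ^ 2) := Real.sqrt_le_sqrt hreal
    _ = V := Real.sqrt_sq hV
  have : ((|m| : ℤ) : ℝ) ≤ (⌈V⌉ : ℝ) := by
    rw [Int.cast_abs]
    exact habs.trans (Int.le_ceil V)
  exact_mod_cast this

theorem finitely_many_small_subtori (n k : ℕ) (hk : 0 < k) (hkn : k ≤ n)
    (V : ℝ) (hV : 0 < V) :
    {Λ : Submodule ℤ (Fin n → ℤ) |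
      (∃ b : Fin k → (Fin n → ℤ), LinearIndependent ℤ b ∧
          Submodule.span ℤ (Set.range b) = Λ ∧ latticeCovol b ≤ V) ∧
      (∀ (x : Fin n → ℤ) (m : ℤ), m ≠ 0 → m • x ∈ Λ → x ∈ Λ)}.Finite := by
  classical
  set mins : Submodule ℤ (Fin n → ℤ) → ((Fin k → Fin n) → ℤ) := fun Λ =>
    if h : (∃ b : Fin k → (Fin n → ℤ), LinearIndependent ℤ b ∧
          Submodule.span ℤ (Set.range b) = Λ ∧ latticeCovol b ≤ V)
    then fun g => ((Matrix.of h.choose).submatrix id g).det else 0 with hmins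
  apply Set.Finite.of_finite_image (f := mins)
  · apply Set.Finite.subset
      (Set.Finite.pi (t := fun _ : Fin k → Fin n => (Set.Icc (-⌈V⌉) ⌈V⌉)) fun _ =>
        Set.finite_Icc _ _)
    rintro _ ⟨Λ, hΛ, rfl⟩
    rw [Set.mem_pi]
    intro g _
    rw [hmins]
    simp only [dif_pos hΛ.1]
    rw [Set.mem_Icc, ← abs_le]
    exact minor_abs_le hV.le hΛ.1.choose_spec.2.2 g
  · rintro Λ₁ h₁ Λ₂ h₂ heq
    simp only [hmins, dif_pos h₁.1, dif_pos h₂.1] at heq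
    obtain ⟨hli, hspan, hcov⟩ := h₁.1.choose_spec
    obtain ⟨hli', hspan', hcov'⟩ := h₂.1.choose_spec
    set b := h₁.1.choose with hb
    set b' := h₂.1.choose with hb'
    have hming : ∀ g : Fin k → Fin n,
        ((Matrix.of b).submatrix id g).det = ((Matrix.of b').submatrix id g).det :=
      fun g => congrFun heq g
    obtain ⟨g₀, hg₀⟩ := exists_minor_ne_zero_of_det_ne_zero _ (gram_det_ne_zero hli)
    -- move to ℚ
    set Aq : Matrix (Fin k) (Fin n) ℚ := (Matrix.of b).map Int.cast with hAq
    set A'q : Matrix (Fin k) (Fin n) ℚ := (Matrix.of b').map Int.cast with hA'q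
    have hcastdet : ∀ (c : Fin k → (Fin n → ℤ)) (g : Fin k → Fin n),
        ((((Matrix.of c).map (Int.cast : ℤ → ℚ))).submatrix id g).det
          = ((((Matrix.of c).submatrix id g).det : ℤ) : ℚ) := by
      intro c g
      rw [Matrix.submatrix_map]
      rw [show ((Matrix.of c).submatrix id g).map (Int.cast : ℤ → ℚ)
          = (Int.castRingHom ℚ).mapMatrix ((Matrix.of c).submatrix id g) from rfl]
      exact (RingHom.map_det _ _).symm
    have hdQ : (Aq.submatrix id g₀).det ≠ 0 := by
      rw [hAq, hcastdet]
      exact_mod_cast hg₀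
    have hd'Q : (A'q.submatrix id g₀).det ≠ 0 := by
      rw [hA'q, hcastdet, ← hming g₀]
      exact_mod_cast hg₀
    have hminQ : ∀ g : Fin k → Fin n,
        (Aq.submatrix id g).det = (A'q.submatrix id g).det := by
      intro g
      rw [hAq, hA'q, hcastdet, hcastdet]
      exact_mod_cast hming g
    have hspanQ : Submodule.span ℚ (Set.range Aq) = Submodule.span ℚ (Set.range A'q) :=
      le_antisymm (rows_le_span Aq A'q g₀ hdQ hminQ)
        (rows_le_span A'q Aq g₀ hd'Q fun g => (hminQ g).symm)
    have hAqrows : (fun i => castLM n (b i)) = fun i => Aq i := rfl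
    have hA'qrows : (fun i => castLM n (b' i)) = fun i => A'q i := rfl
    have hrange : Submodule.span ℚ (Set.range (fun i => castLM n (b i)))
        = Submodule.span ℚ (Set.range (fun i => castLM n (b' i))) := by
      rw [hAqrows, hA'qrows]
      exact hspanQ
    have le1 : Λ₁ ≤ Λ₂ := by
      rw [← hspan]
      exact prim_le b b' Λ₂ hspan' h₂.2 (le_of_eq hrange)
    have le2 : Λ₂ ≤ Λ₁ := by
      rw [← hspan']
      exact prim_le b' b Λ₁ hspan h₁.2 (le_of_eq hrange.symm)
    exact le_antisymm le1 le2
end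

section
/- Let v1,...,vn be nonzero integers with gcd(v1,...,vn) = 1, let T = π(ℝ·(v1,...,vn)) ⊆ (ℝ/ℤ)ⁿ be the corresponding 1-dimensional subtorus, and suppose v1² + ⋯ + vn² > (1/(ω_{n-1} ε^{n-1}))² for some ε > 0. Then T is ε-dense in some subtorus U of (ℝ/ℤ)ⁿ of dimension at least 2, with respect to the L² metric. -/
/-- The volume of the Euclidean unit ball in ℝ^m. -/
noncomputable def unitBallVol (m : ℕ) : ℝ :=
  Real.pi ^ ((m : ℝ) / 2) / Real.Gamma ((m : ℝ) / 2 + 1)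

/-- The Euclidean (L²) norm of a vector in ℝⁿ. -/
noncomputable def l2norm {n : ℕ} (x : Fin n → ℝ) : ℝ := Real.sqrt (∑ i, (x i) ^ 2)

open MeasureTheory
open scoped ENNReal

local notation "⟪" x ", " y "⟫" => @inner ℝ _ _ x y

private lemma bezout_finset {ι : Type*} (s : Finset ι) (f : ι → ℤ) :
    ∃ c : ι → ℤ, ∑ i ∈ s, c i * f i = s.gcd f := by
  classical
  induction s using Finset.induction with
  | empty => exact ⟨0, by simp⟩
  | insert a s ha ih =>
    obtain ⟨c, hc⟩ := ih
    refine ⟨fun i => if i = a then Int.gcdA (f a) (s.gcd f) else Int.gcdB (f a) (s.gcd f) * c i, ?_⟩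
    rw [Finset.sum_insert ha, Finset.gcd_insert]; simp only [if_pos rfl]
    have h2 : ∑ i ∈ s, (if i = a then Int.gcdA (f a) (s.gcd f) else Int.gcdB (f a) (s.gcd f) * c i)
          * f i
        = Int.gcdB (f a) (s.gcd f) * ∑ i ∈ s, c i * f i := by
      rw [Finset.mul_sum]
      refine Finset.sum_congr rfl fun i hi => ?_
      rw [if_neg (by rintro rfl; exact ha hi), mul_assoc]
    rw [h2, hc]
    have := Int.gcd_eq_gcd_ab (f a) (s.gcd f)
    have hg : (gcd (f a) (s.gcd f)) = (Int.gcd (f a) (s.gcd f) : ℤ) := by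
      rw [← Int.coe_gcd]
    rw [hg, this]; simp; ring

private lemma l2norm_eq_norm {N : ℕ} (x : Fin N → ℝ) :
    l2norm x = ‖(WithLp.toLp 2 x : EuclideanSpace ℝ (Fin N))‖ := by
  rw [l2norm, EuclideanSpace.norm_eq]
  congr 1
  refine Finset.sum_congr rfl fun i _ => ?_
  rw [Real.norm_eq_abs, sq_abs]

private lemma cylinder_volume (k : ℕ) (hk : 1 ≤ k) (L r : ℝ) (hL : 0 < L) (hr : 0 < r)
    (u : EuclideanSpace ℝ (Fin (k+1))) (hu : ‖u‖ = 1) :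
    volume {x : EuclideanSpace ℝ (Fin (k+1)) |
        |⟪u, x⟫| < L ∧ ‖x - ⟪u, x⟫ • u‖ < r} =
      ENNReal.ofReal (2*L) * (ENNReal.ofReal r ^ k *
        ENNReal.ofReal (Real.sqrt Real.pi ^ k / Real.Gamma (k / 2 + 1))) := by
  haveI : Nonempty (Fin k) := Fin.pos_iff_nonempty.mp hk
  have hcard : Module.finrank ℝ (EuclideanSpace ℝ (Fin (k+1))) = Fintype.card (Fin (k+1)) := by
    simp [finrank_euclideanSpace]
  have horth : Orthonormal ℝ (Set.restrict ({0} : Set (Fin (k+1))) (fun _ => u)) := by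
    rw [orthonormal_iff_ite]
    intro i j
    rcases i with ⟨i, hi⟩; rcases j with ⟨j, hj⟩
    simp only [Set.mem_singleton_iff] at hi hj
    subst hi; subst hj
    have h1 : (inner ℝ u u : ℝ) = 1 := by rw [real_inner_self_eq_norm_sq, hu, one_pow]
    rw [if_pos rfl]; exact h1
  obtain ⟨b, hb⟩ := horth.exists_orthonormalBasis_extension_of_card_eq hcard
  have hb0 : b 0 = u := hb 0 rfl
  set B : Set (Fin k → ℝ) := {z | ∑ j, z j ^ 2 < r ^ 2} with hB
  have hBmeas : MeasurableSet B := by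
    apply measurableSet_lt _ measurable_const
    exact Finset.measurable_sum _ (fun j _ => (measurable_pi_apply j).pow_const 2)
  set A' : Set (Fin (k+1) → ℝ) :=
    (MeasurableEquiv.piFinSuccAbove (fun _ => ℝ) 0) ⁻¹' (Set.Ioo (-L) L ×ˢ B) with hA'
  have hA'meas : MeasurableSet A' :=
    (MeasurableEquiv.piFinSuccAbove (fun _ => ℝ) 0).measurable
      (measurableSet_Ioo.prod hBmeas)
  set A : Set (EuclideanSpace ℝ (Fin (k+1))) :=
    ((MeasurableEquiv.toLp 2 (Fin (k+1) → ℝ)).symm) ⁻¹' A' with hA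
  have hAmeas : MeasurableSet A := (MeasurableEquiv.toLp 2 (Fin (k+1) → ℝ)).symm.measurable hA'meas
  have hAmem : ∀ x : EuclideanSpace ℝ (Fin (k+1)),
      x ∈ A ↔ (|x 0| < L ∧ ∑ j : Fin k, (x j.succ) ^ 2 < r ^ 2) := by
    intro x
    simp only [hA, hA', Set.mem_preimage, MeasurableEquiv.piFinSuccAbove_apply,
      Set.mem_prod, Set.mem_Ioo, Set.mem_setOf_eq, abs_lt, Fin.zero_succAbove]
    rfl
  have hreprself : b.repr u = EuclideanSpace.single 0 1 := by
    rw [← hb0]; exact b.repr_self 0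
  have hset : {x : EuclideanSpace ℝ (Fin (k+1)) | |⟪u, x⟫| < L ∧ ‖x - ⟪u, x⟫ • u‖ < r}
      = b.repr ⁻¹' A := by
    ext x
    rw [Set.mem_preimage, hAmem]
    have hrepr0 : b.repr x 0 = ⟪u, x⟫ := by
      rw [← hb0, b.repr_apply_apply]
    have h0 : b.repr (x - ⟪u, x⟫ • u) 0 = 0 := by
      rw [map_sub, _root_.map_smul]
      simp [hreprself, hrepr0]
    have hperp : ∀ j : Fin k, b.repr (x - ⟪u, x⟫ • u) j.succ = b.repr x j.succ := by
      intro j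
      rw [map_sub, _root_.map_smul]
      simp [hreprself, EuclideanSpace.single_apply, (Fin.succ_ne_zero j)]
    have hnorm : ‖x - ⟪u, x⟫ • u‖ ^ 2 = ∑ j : Fin k, (b.repr x j.succ) ^ 2 := by
      have h1 : ‖x - ⟪u, x⟫ • u‖ = ‖b.repr (x - ⟪u, x⟫ • u)‖ := (b.repr.norm_map _).symm
      rw [h1, EuclideanSpace.norm_eq, Real.sq_sqrt (by positivity), Fin.sum_univ_succ]
      simp only [Real.norm_eq_abs, sq_abs, h0, hperp]
      ring
    have hiff : ‖x - ⟪u, x⟫ • u‖ < r ↔ ‖x - ⟪u, x⟫ • u‖ ^ 2 < r ^ 2 := by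
      rw [← Real.sqrt_lt' hr, Real.sqrt_sq (norm_nonneg _)]
    rw [Set.mem_setOf_eq, hiff, hnorm, hrepr0]
  rw [hset, (b.measurePreserving_repr).measure_preimage hAmeas.nullMeasurableSet,
    hA, (EuclideanSpace.volume_preserving_symm_measurableEquiv_toLp _).measure_preimage
      hA'meas.nullMeasurableSet, hA',
    (volume_preserving_piFinSuccAbove (fun _ : Fin (k+1) => ℝ) 0).measure_preimage
      (measurableSet_Ioo.prod hBmeas).nullMeasurableSet,
    Measure.volume_eq_prod, Measure.prod_prod, Real.volume_Ioo]
  have hBvol : volume B = ENNReal.ofReal r ^ k *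
      ENNReal.ofReal (Real.sqrt Real.pi ^ k / Real.Gamma (k / 2 + 1)) := by
    rw [← (EuclideanSpace.volume_preserving_symm_measurableEquiv_toLp (Fin k)).measure_preimage
      hBmeas.nullMeasurableSet]
    have hball : ((MeasurableEquiv.toLp 2 (Fin k → ℝ)).symm) ⁻¹' B = Metric.ball 0 r := by
      ext z
      rw [Set.mem_preimage, mem_ball_zero_iff, hB, Set.mem_setOf_eq,
        EuclideanSpace.norm_eq]
      simp only [Real.norm_eq_abs, sq_abs]
      rw [Real.sqrt_lt' hr]
      rfl
    rw [hball, EuclideanSpace.volume_ball]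
    simp [Fintype.card_fin]
  rw [hBvol]
  congr 2
  rw [sub_neg_eq_add]; ring

private lemma exists_short_lattice_vector (k : ℕ) (hk : 1 ≤ k) (ε : ℝ) (hε : 0 < ε)
    (v' : EuclideanSpace ℝ (Fin (k+1))) (hv0 : v' ≠ 0)
    (hbig : 1 < unitBallVol k * ε ^ k * ‖v'‖) :
    ∃ m : EuclideanSpace ℝ (Fin (k+1)), (∀ i, ∃ z : ℤ, m i = (z : ℝ)) ∧ m ≠ 0 ∧
      (∀ t : ℝ, m = t • v' → |t| < 1) ∧
      ∃ θ : ℝ, |θ| < 1 ∧ ‖m - θ • v'‖ < 2 * ε := by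
  have hvnorm : 0 < ‖v'‖ := norm_pos_iff.mpr hv0
  set u : EuclideanSpace ℝ (Fin (k+1)) := ‖v'‖⁻¹ • v' with hudef
  have hu : ‖u‖ = 1 := by
    rw [hudef, norm_smul, norm_inv, norm_norm, inv_mul_cancel₀ hvnorm.ne']
  have huv : ⟪u, v'⟫ = ‖v'‖ := by
    rw [hudef, real_inner_smul_left, real_inner_self_eq_norm_sq, pow_two, ← mul_assoc,
      inv_mul_cancel₀ hvnorm.ne', one_mul]
  set s : Set (EuclideanSpace ℝ (Fin (k+1))) :=
    {x | |⟪u, x⟫| < ‖v'‖ ∧ ‖x - ⟪u, x⟫ • u‖ < 2 * ε} with hs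
  have h_conv : Convex ℝ s := by
    have h1 : s = (fun x : EuclideanSpace ℝ (Fin (k+1)) => ⟪u, x⟫) ⁻¹' Set.Ioo (-‖v'‖) ‖v'‖
        ∩ (fun x : EuclideanSpace ℝ (Fin (k+1)) => x - ⟪u, x⟫ • u) ⁻¹' Metric.ball 0 (2*ε) := by
      ext x
      simp only [hs, Set.mem_setOf_eq, Set.mem_inter_iff, Set.mem_preimage, Set.mem_Ioo,
        mem_ball_zero_iff, abs_lt]
    rw [h1]
    have hlin1 : IsLinearMap ℝ (fun x : EuclideanSpace ℝ (Fin (k+1)) => ⟪u, x⟫) :=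
      ⟨fun x y => inner_add_right u x y, fun c x => real_inner_smul_right u x c⟩
    have hlin2 : IsLinearMap ℝ (fun x : EuclideanSpace ℝ (Fin (k+1)) => x - ⟪u, x⟫ • u) := by
      constructor
      · intro x y; rw [inner_add_right, add_smul]; abel
      · intro c x; rw [real_inner_smul_right, smul_sub, smul_smul]
        rw [hudef, smul_smul, smul_smul]
    exact ((convex_Ioo _ _).is_linear_preimage hlin1).inter
      ((convex_ball _ _).is_linear_preimage hlin2)
  have h_symm : ∀ x ∈ s, -x ∈ s := by
    intro x hx
    obtain ⟨h1, h2⟩ := hx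
    constructor
    · rwa [inner_neg_right, abs_neg]
    · rw [inner_neg_right, neg_smul, sub_neg_eq_add]
      have : -x + ⟪u, x⟫ • u = -(x - ⟪u, x⟫ • u) := by abel
      rwa [this, norm_neg]
  set b₀ : Module.Basis (Fin (k+1)) ℝ (EuclideanSpace ℝ (Fin (k+1))) :=
    (EuclideanSpace.basisFun (Fin (k+1)) ℝ).toBasis with hb₀
  have fund := ZSpan.isAddFundamentalDomain' b₀ (volume : Measure (EuclideanSpace ℝ (Fin (k+1))))
  have hF : volume (ZSpan.fundamentalDomain b₀) = 1 := by
    have h1 : ZSpan.fundamentalDomain b₀ = ((MeasurableEquiv.toLp 2 (Fin (k+1) → ℝ)).symm) ⁻¹'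
        (Set.univ.pi fun _ => Set.Ico (0:ℝ) 1) := by
      ext x
      simp only [ZSpan.mem_fundamentalDomain, Set.mem_preimage, Set.mem_pi, Set.mem_univ,
        forall_true_left]
      constructor <;> intro h i <;> have := h i <;>
        simpa [hb₀, OrthonormalBasis.coe_toBasis_repr_apply,
          EuclideanSpace.basisFun_repr] using this
    rw [h1, (EuclideanSpace.volume_preserving_symm_measurableEquiv_toLp _).measure_preimage
      (MeasurableSet.univ_pi fun _ => measurableSet_Ico).nullMeasurableSet]
    rw [volume_pi_pi]
    simp [Real.volume_Ico]
  have hsvol : volume s = ENNReal.ofReal (2*‖v'‖) * (ENNReal.ofReal (2*ε) ^ k *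
      ENNReal.ofReal (Real.sqrt Real.pi ^ k / Real.Gamma (k / 2 + 1))) :=
    cylinder_volume k hk ‖v'‖ (2*ε) hvnorm (by positivity) u hu
  have hineq : volume (ZSpan.fundamentalDomain b₀) *
      2 ^ Module.finrank ℝ (EuclideanSpace ℝ (Fin (k+1))) < volume s := by
    rw [hF, one_mul, hsvol, finrank_euclideanSpace, Fintype.card_fin]
    have hC : Real.sqrt Real.pi ^ k / Real.Gamma (k / 2 + 1) = unitBallVol k := by
      rw [unitBallVol]
      congr 1
      rw [Real.sqrt_eq_rpow, ← Real.rpow_natCast (Real.pi ^ ((1:ℝ)/2)) k,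
        ← Real.rpow_mul Real.pi_pos.le]
      ring_nf
    rw [hC]
    set C := unitBallVol k with hCdef
    have hCpos : 0 < C := by
      rw [hCdef, unitBallVol]
      apply div_pos (Real.rpow_pos_of_pos Real.pi_pos _)
      apply Real.Gamma_pos_of_pos; positivity
    have h2 : (2 : ℝ≥0∞) ^ (k+1) = ENNReal.ofReal (2 ^ (k+1)) := by
      simp [ENNReal.ofReal_pow]
    rw [h2, ← ENNReal.ofReal_pow (by positivity), ← ENNReal.ofReal_mul (by positivity),
      ← ENNReal.ofReal_mul (by positivity)]
    rw [ENNReal.ofReal_lt_ofReal_iff (by positivity)]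
    calc (2:ℝ) ^ (k+1) = 2^(k+1) * 1 := by ring
    _ < 2^(k+1) * (C * ε ^ k * ‖v'‖) := by
        apply mul_lt_mul_of_pos_left hbig (by positivity)
    _ = 2 * ‖v'‖ * ((2*ε)^k * C) := by ring
  haveI : Countable ↥(Submodule.span ℤ (Set.range ⇑b₀)).toAddSubgroup :=
    inferInstanceAs (Countable (Submodule.span ℤ (Set.range ⇑b₀)))
  obtain ⟨x, hx0, hxs⟩ := exists_ne_zero_mem_lattice_of_measure_mul_two_pow_lt_measure
    fund h_symm h_conv hineq
  set m : EuclideanSpace ℝ (Fin (k+1)) := (x : EuclideanSpace ℝ (Fin (k+1))) with hm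
  have hmem : m ∈ Submodule.span ℤ (Set.range ⇑b₀) := by
    rw [← Submodule.mem_toAddSubgroup]; exact x.2
  have hint : ∀ i, ∃ z : ℤ, m i = (z : ℝ) := by
    intro i
    obtain ⟨z, hz⟩ := (b₀.mem_span_iff_repr_mem ℤ _).mp hmem i
    refine ⟨z, ?_⟩
    have : b₀.repr m i = m i := by
      simp [hb₀, OrthonormalBasis.coe_toBasis_repr_apply, EuclideanSpace.basisFun_repr]
    rw [← this, ← hz]
    rfl
  have hmne : m ≠ 0 := fun h => hx0 (Subtype.ext h)
  obtain ⟨h1, h2⟩ := hxs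
  refine ⟨m, hint, hmne, ?_, ⟪u, m⟫ / ‖v'‖, ?_, ?_⟩
  · intro t ht
    have : ⟪u, m⟫ = t * ‖v'‖ := by
      rw [ht, real_inner_smul_right, huv]
    rw [this, abs_mul, abs_of_pos hvnorm] at h1
    exact (mul_lt_mul_iff_left₀ hvnorm).mp (by linarith : |t| * ‖v'‖ < 1 * ‖v'‖)
  · rw [abs_div, abs_of_pos hvnorm, div_lt_one hvnorm]; exact h1
  · have heq : (⟪u, m⟫ / ‖v'‖) • v' = ⟪u, m⟫ • u := by
      rw [hudef, smul_smul, div_eq_mul_inv]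
    rw [heq]; exact h2

theorem long_subtorus_dense_in_bigger_subtorus (n : ℕ) (hn : 1 ≤ n) (ε : ℝ) (hε : 0 < ε)
    (v : Fin n → ℤ) (hv : ∀ i, v i ≠ 0) (hgcd : Finset.univ.gcd v = 1)
    (hlong : ((∑ i, (v i) ^ 2 : ℤ) : ℝ) > (1 / (unitBallVol (n - 1) * ε ^ (n - 1))) ^ 2) :
    ∃ W : Submodule ℝ (Fin n → ℝ),
      -- W is a rational subspace: it is spanned by integer vectors
      (∃ S : Set (Fin n → ℤ), W = Submodule.span ℝ ((fun z : Fin n → ℤ => fun i => ((z i : ℤ) : ℝ)) '' S)) ∧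
      -- the corresponding subtorus has dimension at least 2
      2 ≤ Module.finrank ℝ W ∧
      -- the line through v is contained in W
      (fun i => ((v i : ℤ) : ℝ)) ∈ W ∧
      -- the subtorus π(ℝv) is ε-dense (in the L² flat-torus metric) in the subtorus π(W)
      (∀ w ∈ W, ∃ t : ℝ, ∃ m : Fin n → ℤ,
        l2norm (fun i => t * v i - w i - m i) ≤ ε) := by
  classical
  obtain ⟨k, rfl⟩ : ∃ k, n = k + 1 := ⟨n - 1, (Nat.succ_pred_eq_of_pos hn).symm⟩
  simp only [Nat.add_sub_cancel] at hlong
  rcases Nat.eq_zero_or_pos k with rfl | hk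
  · -- n = 1 : contradiction with hlong
    exfalso
    have hunit : IsUnit (v 0) := isUnit_of_dvd_one (by
      rw [← hgcd]
      exact Finset.dvd_gcd fun i _ => by
        have hi : i = 0 := Fin.ext (by omega)
        rw [hi])
    have hv2 : (v 0) ^ 2 = 1 := by
      rcases Int.isUnit_iff.mp hunit with h | h <;> rw [h] <;> norm_num
    have hsum : (∑ i, (v i) ^ 2 : ℤ) = 1 := by
      rw [Fin.sum_univ_one, hv2]
    have hub : unitBallVol 0 = 1 := by
      rw [unitBallVol]
      norm_num [Real.Gamma_one]
    rw [hsum, hub] at hlong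
    norm_num at hlong
  -- main case : k ≥ 1
  set v' : EuclideanSpace ℝ (Fin (k+1)) := WithLp.toLp 2 (fun i => (v i : ℝ)) with hv'def
  have hv'0 : v' ≠ 0 := by
    intro h
    have h0 := congr_arg (fun y : EuclideanSpace ℝ (Fin (k+1)) => y 0) h
    simp only [hv'def] at h0
    have h0' : ((v 0 : ℤ) : ℝ) = 0 := h0
    exact hv 0 (by exact_mod_cast h0')
  have hvnorm : 0 < ‖v'‖ := norm_pos_iff.mpr hv'0
  have hωpos : 0 < unitBallVol k := by
    rw [unitBallVol]
    exact div_pos (Real.rpow_pos_of_pos Real.pi_pos _)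
      (Real.Gamma_pos_of_pos (by positivity))
  have hnormsq : ‖v'‖ ^ 2 = ((∑ i, (v i) ^ 2 : ℤ) : ℝ) := by
    rw [EuclideanSpace.norm_eq, Real.sq_sqrt (by positivity)]
    push_cast
    refine Finset.sum_congr rfl fun i _ => ?_
    rw [Real.norm_eq_abs, sq_abs]
  have hbig : 1 < unitBallVol k * ε ^ k * ‖v'‖ := by
    set a := unitBallVol k * ε ^ k with ha
    have hapos : 0 < a := by positivity
    rw [← hnormsq] at hlong
    have h1 : 1 / a < ‖v'‖ := by
      nlinarith [hlong, hvnorm, hapos]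
    calc (1:ℝ) = a * (1/a) := by field_simp
    _ < a * ‖v'‖ := by exact mul_lt_mul_of_pos_left h1 hapos
    _ = unitBallVol k * ε ^ k * ‖v'‖ := by rw [ha]
  obtain ⟨m, hint, hm0, hmul, θ, hθ, hshort⟩ :=
    exists_short_lattice_vector k hk ε hε v' hv'0 hbig
  choose c hc using hint
  -- m is not a real multiple of v'
  obtain ⟨bz, hbz⟩ := bezout_finset Finset.univ v
  rw [hgcd] at hbz
  have hnotmul : ∀ t : ℝ, m ≠ t • v' := by
    intro t ht
    have htlt := hmul t ht
    have h1 : ∀ i, (c i : ℝ) = t * (v i : ℝ) := fun i => by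
      rw [← hc i, ht]; rfl
    have hsumt : ((∑ i, bz i * c i : ℤ) : ℝ) = t := by
      push_cast
      rw [Finset.sum_congr rfl (fun i _ => by rw [h1 i]; ring :
        ∀ i ∈ Finset.univ, (bz i : ℝ) * (c i : ℝ) = t * ((bz i : ℝ) * (v i : ℝ))),
        ← Finset.mul_sum]
      have h3 : ∑ i, (bz i : ℝ) * (v i : ℝ) = ((∑ i, bz i * v i : ℤ) : ℝ) := by
        push_cast; rfl
      rw [h3, hbz]
      simp
    rw [← hsumt] at htlt
    have hz0 : (∑ i, bz i * c i : ℤ) = 0 := by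
      have habs : |(∑ i, bz i * c i : ℤ)| < 1 := by exact_mod_cast htlt
      rwa [Int.abs_lt_one_iff] at habs
    rw [hz0] at hsumt
    simp only [Int.cast_zero] at hsumt
    rw [← hsumt, zero_smul] at ht
    exact hm0 ht
  -- linear independence
  have hli : LinearIndependent ℝ ![v', m] := by
    rw [LinearIndependent.pair_iff' hv'0]
    intro a h
    exact hnotmul a h.symm
  set vR : Fin (k+1) → ℝ := fun i => ((v i : ℤ) : ℝ) with hvR
  set cR : Fin (k+1) → ℝ := fun i => ((c i : ℤ) : ℝ) with hcR
  have hmeq : m = cR := funext hc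
  refine ⟨Submodule.span ℝ {vR, cR}, ⟨{v, c}, by rw [Set.image_pair]⟩, ?_, ?_, ?_⟩
  · -- finrank ≥ 2
    have hli' : LinearIndependent ℝ ![vR, cR] := by
      rw [← hmeq]
      have h' := hli.map' (WithLp.linearEquiv 2 ℝ (Fin (k+1) → ℝ)).toLinearMap (LinearEquiv.ker _)
      have e : ![vR, m.ofLp] = (WithLp.linearEquiv 2 ℝ (Fin (k+1) → ℝ)).toLinearMap ∘ ![v', m] := by
        ext i j; fin_cases i <;> rfl
      rw [e]; exact h'
    have hrange : Set.range ![vR, cR] = {vR, cR} := by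
      ext z
      simp [Fin.exists_fin_two, or_comm]
    rw [← hrange, finrank_span_eq_card hli', Fintype.card_fin]
  · exact Submodule.subset_span (Set.mem_insert _ _)
  · intro w hw
    obtain ⟨a, s, hw'⟩ := Submodule.mem_span_pair.mp hw
    set r : ℝ := s - round s with hr
    refine ⟨a + r * θ, fun i => -round s * c i, ?_⟩
    have hwi : ∀ i, w i = a * (v i : ℝ) + s * (c i : ℝ) := fun i => by
      rw [← hw']; rfl
    have hfun : (fun i => (a + r * θ) * ((v i : ℤ) : ℝ) - w i - ((-round s * c i : ℤ) : ℝ))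
        = (fun i => (-r) * (((c i : ℤ) : ℝ) - θ * ((v i : ℤ) : ℝ))) := by
      funext i
      rw [hwi i]
      push_cast
      rw [hr]
      ring
    rw [hfun]
    have heq2 : (fun i => (-r) * (((c i : ℤ) : ℝ) - θ * ((v i : ℤ) : ℝ)))
        = (((-r) • (m - θ • v') : EuclideanSpace ℝ (Fin (k+1))) : Fin (k+1) → ℝ) := by
      funext i
      rw [← hc i]
      rfl
    rw [heq2]
    have hln : l2norm (((-r) • (m - θ • v') : EuclideanSpace ℝ (Fin (k+1))) : Fin (k+1) → ℝ)
        = ‖((-r) • (m - θ • v') : EuclideanSpace ℝ (Fin (k+1)))‖ := l2norm_eq_norm _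
    rw [hln, norm_smul, Real.norm_eq_abs, abs_neg]
    have habs : |r| ≤ 1/2 := abs_sub_round s
    calc |r| * ‖m - θ • v'‖ ≤ (1/2) * (2 * ε) := by
          apply mul_le_mul habs hshort.le (norm_nonneg _) (by norm_num)
    _ = ε := by ring
end

section
/- Let Δ be a subgroup of (ℝ/ℤ)ⁿ that is the direct sum of a k-dimensional subtorus T and a finite subgroup H, and suppose vol_k(T)·|H| ≤ V for some V > 0. Then vol_k(T) ≤ V and |H| ≤ V. Moreover, for fixed n, k, V, there are only finitely many such subgroups Δ. -/
/-- The k-dimensional subtorus of (ℝ/ℤ)ⁿ spanned by the integer vectors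
`b 0, ..., b (k-1)`, as a subset of the torus. -/
noncomputable def subtorusSet {n k : ℕ} (b : Fin k → (Fin n → ℤ)) :
    Set (Fin n → AddCircle (1 : ℝ)) :=
  {x | ∃ t : Fin k → ℝ, ∀ i, x i = ((∑ j, t j * (b j i : ℝ) : ℝ) : AddCircle (1 : ℝ))}


open Matrix in
section
variable {F : Type*} [Field F] {m p : ℕ}

/-- If some maximal square submatrix has nonzero determinant, the rows are independent. -/
lemma rows_li_of_det_ne_zero (M : Matrix (Fin m) (Fin p) F) (g : Fin m → Fin p)
    (h : (M.submatrix id g).det ≠ 0) : LinearIndependent F (fun i => M i) := by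
  rw [Fintype.linearIndependent_iff]
  intro c hc
  have hU : IsUnit (M.submatrix id g) := (Matrix.isUnit_iff_isUnit_det _).mpr
    (isUnit_iff_ne_zero.mpr h)
  have hinj := Matrix.vecMul_injective_iff_isUnit.mpr hU
  have : Matrix.vecMul c (M.submatrix id g) = Matrix.vecMul 0 (M.submatrix id g) := by
    rw [Matrix.zero_vecMul]
    funext j
    have := congrFun hc (g j)
    simpa [Matrix.vecMul, dotProduct, Finset.sum_apply] using this
  intro i; exact congrFun (hinj this) i

/-- Linearly independent rows admit an invertible maximal square submatrix. -/
lemma exists_det_ne_zero_of_rows_li (M : Matrix (Fin m) (Fin p) F)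
    (h : LinearIndependent F (fun i => M i)) :
    ∃ g : Fin m → Fin p, Function.Injective g ∧ (M.submatrix id g).det ≠ 0 := by
  classical
  have hrank : M.rank = m := by
    rw [Matrix.rank_eq_finrank_span_row]
    rw [Matrix.row_def]; exact (finrank_span_eq_card h).trans (Fintype.card_fin m)
  have hcols : Submodule.span F (Set.range Mᵀ) = ⊤ := by
    apply Submodule.eq_top_of_finrank_eq
    rw [show Set.range Mᵀ = Set.range M.col from rfl, ← Matrix.rank_eq_finrank_span_cols, hrank]
    simp [Module.finrank_pi]
  obtain ⟨t, hts, hspan, hli⟩ := exists_linearIndependent F (Set.range Mᵀ)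
  rw [hcols] at hspan
  have htfin : t.Finite := hli.setFinite
  haveI : Fintype t := htfin.fintype
  have hbasis : Module.Basis t F (Fin m → F) := Module.Basis.mk hli (by rw [Subtype.range_coe]; rw [hspan])
  have hcard : Fintype.card t = m := by
    have := Module.finrank_eq_card_basis hbasis
    simpa [Module.finrank_pi] using this.symm
  have e : Fin m ≃ t := (Fintype.equivFinOfCardEq hcard).symm
  have hchoice : ∀ x : t, ∃ j : Fin p, Mᵀ j = (x : Fin m → F) := fun x => hts x.2
  choose gf hgf using hchoice
  refine ⟨fun i => gf (e i), ?_, ?_⟩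
  · intro i i' hii
    apply e.injective
    apply Subtype.coe_injective
    show ((e i : Fin m → F)) = ((e i' : Fin m → F))
    rw [← hgf (e i), ← hgf (e i')]
    simp only at hii
    rw [hii]
  · have hcolsli : LinearIndependent F (fun j => (M.submatrix id (fun i => gf (e i)))ᵀ j) := by
      have : (fun j => (M.submatrix id (fun i => gf (e i)))ᵀ j) = fun j => ((e j : Fin m → F)) := by
        funext j; rw [← hgf (e j)]; rfl
      rw [this]
      exact hli.comp e e.injective
    have := Matrix.linearIndependent_cols_iff_isUnit.mp hcolsli
    exact ((Matrix.isUnit_iff_isUnit_det _).mp this).ne_zero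

end

section
variable {n k : ℕ}

/-- Integer vectors linearly independent over ℤ are linearly independent over ℝ after casting. -/
lemma li_real_of_li_int {b : Fin k → (Fin n → ℤ)} (hb : LinearIndependent ℤ b) :
    LinearIndependent ℝ (fun i => fun l => ((b i l : ℝ))) := by
  classical
  -- move to ℚ
  set bQ : Fin k → (Fin n → ℚ) := fun i l => ((b i l : ℚ)) with hbQ
  have hZQ : LinearIndependent ℤ bQ := by
    let L : (Fin n → ℤ) →ₗ[ℤ] (Fin n → ℚ) :=
      LinearMap.pi fun l => (Int.castAddHom ℚ).toIntLinearMap.comp (LinearMap.proj l)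
    have hker : LinearMap.ker L = ⊥ := by
      rw [LinearMap.ker_eq_bot']
      intro x hx
      funext l
      have := congrFun (congrArg (fun y => (y : Fin n → ℚ)) hx) l
      simpa [L] using this
    have := hb.map' L hker
    have h2 : bQ = ⇑L ∘ b := by funext i l; simp [L, bQ]
    rw [h2]; exact this
  have hQ : LinearIndependent ℚ bQ := (LinearIndependent.iff_fractionRing ℤ ℚ).mp hZQ
  obtain ⟨g, hg, hdet⟩ := exists_det_ne_zero_of_rows_li (Matrix.of bQ) hQ
  apply rows_li_of_det_ne_zero (Matrix.of fun i l => ((b i l : ℝ))) g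
  have hmap : ((Matrix.of fun i l => ((b i l : ℝ)))).submatrix id g
      = ((Matrix.of bQ).submatrix id g).map (Rat.castHom ℝ) := by
    ext i j
    simp [bQ]
  rw [hmap]
  rw [show ((Matrix.of bQ).submatrix id g).map (⇑(Rat.castHom ℝ))
      = (Rat.castHom ℝ).mapMatrix ((Matrix.of bQ).submatrix id g) from rfl, ← RingHom.map_det]
  simpa using hdet

/-- Laplace expansion of the bordered minor along the last row. -/
lemma det_snoc_eq (B : Fin k → (Fin n → ℝ)) (x : Fin n → ℝ) (g : Fin (k + 1) → Fin n) :
    (Matrix.of fun i j => (Fin.snoc B x : Fin (k+1) → Fin n → ℝ) i (g j)).det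
      = ∑ j : Fin (k + 1), (-1 : ℝ) ^ (k + (j : ℕ)) * x (g j) *
          (Matrix.of fun i j' : Fin k => B i (g (Fin.succAbove j j'))).det := by
  rw [Matrix.det_succ_row _ (Fin.last k)]
  apply Finset.sum_congr rfl
  intro j _
  have h2 : (Matrix.of fun i j'' => (Fin.snoc B x : Fin (k+1) → Fin n → ℝ) i (g j'')).submatrix
      (Fin.last k).succAbove j.succAbove
      = Matrix.of (fun i j' : Fin k => B i (g (Fin.succAbove j j'))) := by
    ext i j'
    simp [Matrix.submatrix_apply, Fin.succAbove_last, Fin.snoc_castSucc]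
  rw [h2]
  simp only [Matrix.of_apply, Fin.snoc_last, Fin.val_last]

end

section
variable {n k : ℕ}

/-- Membership in the real span of the rows is characterized by vanishing of the
bordered maximal minors, whose coefficients only involve the maximal minors of `B`. -/
lemma mem_span_iff_forms (B : Fin k → (Fin n → ℝ)) (hB : LinearIndependent ℝ B) (x : Fin n → ℝ) :
    x ∈ Submodule.span ℝ (Set.range B) ↔
      ∀ g : Fin (k+1) → Fin n, (∑ j : Fin (k+1), (-1:ℝ)^(k + (j:ℕ)) * x (g j) *
        (Matrix.of fun i j' : Fin k => B i (g (Fin.succAbove j j'))).det) = 0 := by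
  constructor
  · intro hx g
    rw [← det_snoc_eq]
    by_contra hdet
    have hli := rows_li_of_det_ne_zero
      (Matrix.of fun i j => (Fin.snoc B x : Fin (k+1) → Fin n → ℝ) i (g j)) id (by simpa using hdet)
    have hsnoc : ¬ LinearIndependent ℝ (Fin.snoc B x : Fin (k+1) → Fin n → ℝ) := by
      rw [linearIndependent_fin_snoc]
      tauto
    rw [Fintype.not_linearIndependent_iff] at hsnoc
    obtain ⟨c, hc, i0, hi0⟩ := hsnoc
    rw [Fintype.linearIndependent_iff] at hli
    refine hi0 (hli c ?_ i0)
    funext j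
    have := congrFun hc (g j)
    simpa [Finset.sum_apply] using this
  · intro hforms
    by_contra hx
    have hsnoc : LinearIndependent ℝ (Fin.snoc B x : Fin (k+1) → Fin n → ℝ) :=
      linearIndependent_fin_snoc.mpr ⟨hB, hx⟩
    obtain ⟨g, hg, hdet⟩ :=
      exists_det_ne_zero_of_rows_li (Matrix.of (Fin.snoc B x : Fin (k+1) → Fin n → ℝ)) hsnoc
    apply hdet
    have : (Matrix.of (Fin.snoc B x : Fin (k+1) → Fin n → ℝ)).submatrix id g
        = Matrix.of fun i j => (Fin.snoc B x : Fin (k+1) → Fin n → ℝ) i (g j) := rfl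
    rw [this, det_snoc_eq]
    exact hforms g

end

section
open Matrix
variable {n k : ℕ}

/-- The Gram-type matrix of pairwise products of rows of `B`, over a set `s` of columns. -/
noncomputable def gramOn (B : Fin k → Fin n → ℝ) (s : Finset (Fin n)) : Matrix (Fin k) (Fin k) ℝ :=
  Matrix.of fun i j => ∑ l ∈ s, B i l * B j l

lemma gramOn_dot (B : Fin k → Fin n → ℝ) (s : Finset (Fin n)) (x : Fin k → ℝ) :
    x ⬝ᵥ (gramOn B s *ᵥ x) = ∑ l ∈ s, (∑ i, x i * B i l) ^ 2 := by
  simp only [gramOn, dotProduct, mulVec, Matrix.of_apply]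
  calc ∑ i, x i * ∑ j, (∑ l ∈ s, B i l * B j l) * x j
      = ∑ i, ∑ j, ∑ l ∈ s, x i * (B i l * B j l * x j) := by
        apply Finset.sum_congr rfl; intro i _
        rw [Finset.mul_sum]; apply Finset.sum_congr rfl; intro j _
        rw [Finset.sum_mul, Finset.mul_sum]
    _ = ∑ i, ∑ l ∈ s, ∑ j, x i * (B i l * B j l * x j) := by
        apply Finset.sum_congr rfl; intro i _; exact Finset.sum_comm
    _ = ∑ l ∈ s, ∑ i, ∑ j, x i * (B i l * B j l * x j) := Finset.sum_comm
    _ = ∑ l ∈ s, (∑ i, x i * B i l) ^ 2 := by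
        apply Finset.sum_congr rfl; intro l _
        rw [sq, Finset.sum_mul_sum]
        apply Finset.sum_congr rfl; intro i _
        apply Finset.sum_congr rfl; intro j _
        ring

lemma gramOn_posSemidef (B : Fin k → Fin n → ℝ) (s : Finset (Fin n)) :
    (gramOn B s).PosSemidef := by
  refine Matrix.PosSemidef.of_dotProduct_mulVec_nonneg ?_ ?_
  · ext i j
    simp [gramOn, Matrix.conjTranspose_apply, mul_comm]
  · intro x
    have hst : star x = x := by funext i; simp
    rw [hst, gramOn_dot]
    exact Finset.sum_nonneg fun l _ => sq_nonneg _

lemma PosSemidef.detNonneg {A : Matrix (Fin k) (Fin k) ℝ} (hA : A.PosSemidef) : 0 ≤ A.det := by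
  rw [hA.1.det_eq_prod_eigenvalues]
  exact Finset.prod_nonneg fun i _ => by simpa using hA.eigenvalues_nonneg i
end

section
open Matrix
variable {k : ℕ}

open scoped MatrixOrder in
lemma det_le_det_add {A R : Matrix (Fin k) (Fin k) ℝ} (hA : A.PosSemidef) (hR : R.PosSemidef) :
    A.det ≤ (A + R).det := by
  rcases eq_or_ne A.det 0 with h0 | h0
  · rw [h0]; exact PosSemidef.detNonneg (hA.add hR)
  · set S := CFC.sqrt A with hSdef
    have hS : S.PosSemidef := (CFC.sqrt_nonneg A).posSemidef
    have hSS : S * S = A := CFC.sqrt_mul_sqrt_self A hA.nonneg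
    have hdS : S.det ≠ 0 := fun h => h0 (by rw [← hSS, Matrix.det_mul, h, mul_zero])
    have hSunit : IsUnit S.det := isUnit_iff_ne_zero.mpr hdS
    have h1 : S * S⁻¹ = 1 := Matrix.mul_nonsing_inv S hSunit
    have h2 : S⁻¹ * S = 1 := Matrix.nonsing_inv_mul S hSunit
    set Q := S⁻¹ * R * S⁻¹ with hQdef
    have hQ : Q.PosSemidef := by
      have hherm : (S⁻¹)ᴴ = S⁻¹ := hS.1.inv
      have := hR.mul_mul_conjTranspose_same S⁻¹
      rwa [hherm] at this
    have hSQS : S * Q * S = R := by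
      rw [hQdef, ← Matrix.mul_assoc, ← Matrix.mul_assoc, h1, Matrix.one_mul,
        Matrix.mul_assoc, h2, Matrix.mul_one]
    have key : A + R = S * (1 + Q) * S := by
      rw [Matrix.mul_add, Matrix.mul_one, Matrix.add_mul, hSS, hSQS]
    have h1Q : (1 + Q).IsHermitian := Matrix.isHermitian_one.add hQ.1
    have heig : ∀ i, 1 ≤ h1Q.eigenvalues i := by
      intro i
      have hval := h1Q.eigenvalues_eq i
      set v : EuclideanSpace ℝ (Fin k) := h1Q.eigenvectorBasis i with hv
      have hst : star (⇑v) = ⇑v := by funext l; simp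
      have hnorm : ‖v‖ = 1 := h1Q.eigenvectorBasis.orthonormal.1 i
      have hvv : dotProduct (⇑v) (⇑v) = 1 := by
        have := EuclideanSpace.inner_eq_star_dotProduct v v
        rw [hst] at this
        have h2 : (inner ℝ v v : ℝ) = 1 := by
          rw [real_inner_self_eq_norm_sq, hnorm]; norm_num
        rw [h2] at this
        simpa using this.symm
      have hQv : 0 ≤ dotProduct (⇑v) (Q *ᵥ ⇑v) := by
        have := hQ.dotProduct_mulVec_nonneg (⇑v)
        rwa [hst] at this
      rw [hval, hst]
      have hmv : (1 + Q) *ᵥ ⇑v = ⇑v + Q *ᵥ ⇑v := by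
        rw [Matrix.add_mulVec, Matrix.one_mulVec]
      rw [hmv, dotProduct_add, hvv]
      simpa using hQv
    have hdet1Q : 1 ≤ (1 + Q).det := by
      rw [h1Q.det_eq_prod_eigenvalues]
      have h1le : (1:ℝ) ≤ ∏ i, h1Q.eigenvalues i := by
        calc (1:ℝ) = ∏ _i : Fin k, (1:ℝ) := by simp
          _ ≤ ∏ i, h1Q.eigenvalues i :=
            Finset.prod_le_prod (fun _ _ => zero_le_one) (fun i _ => heig i)
      simpa using h1le
    have hAdet : A.det = S.det * S.det := by rw [← hSS, Matrix.det_mul]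
    have hSdnn : 0 ≤ S.det := PosSemidef.detNonneg hS
    calc A.det = S.det * S.det * 1 := by rw [hAdet, mul_one]
      _ ≤ S.det * S.det * (1 + Q).det := by
          apply mul_le_mul_of_nonneg_left hdet1Q (mul_nonneg hSdnn hSdnn)
      _ = (A + R).det := by rw [key, Matrix.det_mul, Matrix.det_mul]; ring
end

section
open Matrix
variable {n k : ℕ}

lemma gram_posDef {B : Fin k → Fin n → ℝ} (hB : LinearIndependent ℝ B) :
    (gramOn B Finset.univ).PosDef := by
  refine Matrix.PosDef.of_dotProduct_mulVec_pos (gramOn_posSemidef B Finset.univ).1 fun x hx => ?_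
  have hst : star x = x := by funext i; simp
  rw [hst, gramOn_dot]
  have hy : ∃ l, (∑ i, x i * B i l) ≠ 0 := by
    by_contra hno
    push_neg at hno
    apply hx
    have hz : (∑ i, x i • B i) = 0 := by
      funext l
      rw [Finset.sum_apply]
      simpa [smul_eq_mul] using hno l
    have := Fintype.linearIndependent_iff.mp hB x hz
    funext i; exact this i
  obtain ⟨l0, hl0⟩ := hy
  exact Finset.sum_pos' (fun l _ => sq_nonneg _) ⟨l0, Finset.mem_univ _, by positivity⟩

lemma minor_sq_le_gram (B : Fin k → Fin n → ℝ) (g : Fin k → Fin n) (hg : Function.Injective g) :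
    ((Matrix.of fun i j : Fin k => B i (g j)).det) ^ 2 ≤ (gramOn B Finset.univ).det := by
  classical
  set s := Finset.image g Finset.univ with hs
  have hM : gramOn B s = (Matrix.of fun i j : Fin k => B i (g j)) *
      (Matrix.of fun i j : Fin k => B i (g j))ᵀ := by
    ext i j
    rw [Matrix.mul_apply]
    simp only [gramOn, Matrix.of_apply, Matrix.transpose_apply, hs]
    rw [Finset.sum_image (fun a _ b _ h => hg h)]
  have hsplit : gramOn B Finset.univ = gramOn B s + gramOn B sᶜ := by
    ext i j
    simp only [gramOn, Matrix.of_apply, Matrix.add_apply]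
    rw [← Finset.sum_add_sum_compl s]
  have hdet : (gramOn B s).det = ((Matrix.of fun i j : Fin k => B i (g j)).det) ^ 2 := by
    rw [hM, Matrix.det_mul, Matrix.det_transpose, sq]
  rw [hsplit, ← hdet]
  exact det_le_det_add (gramOn_posSemidef B s) (gramOn_posSemidef B sᶜ)

lemma gram_cast_eq (b : Fin k → (Fin n → ℤ)) :
    (Matrix.of fun i j : Fin k => ((∑ l, b i l * b j l : ℤ) : ℝ))
      = gramOn (fun i l => ((b i l : ℝ))) Finset.univ := by
  ext i j
  simp only [Matrix.of_apply, gramOn]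
  push_cast
  rfl

lemma sq_latticeCovol {b : Fin k → (Fin n → ℤ)} (hb : LinearIndependent ℤ b) :
    latticeCovol b ^ 2 = (gramOn (fun i l => ((b i l : ℝ))) Finset.univ).det := by
  rw [latticeCovol, gram_cast_eq]
  exact Real.sq_sqrt (PosSemidef.detNonneg (gramOn_posSemidef _ _))

lemma one_le_latticeCovol {b : Fin k → (Fin n → ℤ)} (hb : LinearIndependent ℤ b) :
    1 ≤ latticeCovol b := by
  have hpd := gram_posDef (li_real_of_li_int hb)
  have hdetpos : 0 < (gramOn (fun i l => ((b i l : ℝ))) Finset.univ).det := hpd.det_pos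
  -- the determinant is the cast of an integer determinant
  have hdint : (gramOn (fun i l => ((b i l : ℝ))) Finset.univ).det
      = (((Matrix.of fun i j : Fin k => (∑ l, b i l * b j l : ℤ)).det : ℤ) : ℝ) := by
    rw [← gram_cast_eq]
    have : (Matrix.of fun i j : Fin k => ((∑ l, b i l * b j l : ℤ) : ℝ))
        = (Int.castRingHom ℝ).mapMatrix (Matrix.of fun i j : Fin k => (∑ l, b i l * b j l : ℤ)) := by
      ext i j; simp
    rw [this, ← RingHom.map_det]
    simp
  have hint : (1:ℤ) ≤ (Matrix.of fun i j : Fin k => (∑ l, b i l * b j l : ℤ)).det := by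
    have : (0:ℤ) < (Matrix.of fun i j : Fin k => (∑ l, b i l * b j l : ℤ)).det := by
      have := hdetpos
      rw [hdint] at this
      exact_mod_cast this
    omega
  have h1le : (1:ℝ) ≤ (gramOn (fun i l => ((b i l : ℝ))) Finset.univ).det := by
    rw [hdint]; exact_mod_cast hint
  rw [latticeCovol, gram_cast_eq]
  calc (1:ℝ) = Real.sqrt 1 := Real.sqrt_one.symm
    _ ≤ _ := Real.sqrt_le_sqrt h1le

end

section
variable {n : ℕ}

lemma circle_torsion_finite (N : ℕ) (hN : N ≠ 0) :
    {z : AddCircle (1:ℝ) | N • z = 0}.Finite := by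
  have hsub : {z : AddCircle (1:ℝ) | N • z = 0} ⊆
      (fun m : ℤ => (((m : ℝ) / N : ℝ) : AddCircle (1:ℝ))) '' (Set.Ico 0 (N:ℤ)) := by
    intro z hz
    obtain ⟨r, rfl⟩ := QuotientAddGroup.mk_surjective z
    have hz' : ((N • r : ℝ) : AddCircle (1:ℝ)) = 0 := by
      rw [AddCircle.coe_nsmul]; exact hz
    rw [AddCircle.coe_eq_zero_iff] at hz'
    obtain ⟨m, hm⟩ := hz'
    have hNr : (N:ℝ) * r = m := by
      have := hm.symm
      simpa [nsmul_eq_mul, zsmul_eq_mul] using this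
    have hNne : (N:ℝ) ≠ 0 := Nat.cast_ne_zero.mpr hN
    have hr : r = (m:ℝ) / N := by field_simp [hNne]; linarith [hNr]
    refine ⟨m % N, ⟨Int.emod_nonneg m (by exact_mod_cast hN), ?_⟩, ?_⟩
    · exact Int.emod_lt_of_pos m (by positivity)
    · -- ↑((m % N)/N) = ↑r
      have key : ((m % N : ℤ) : ℝ) / N - r = -((m / N : ℤ) : ℝ) := by
        rw [hr]
        have : (m % N : ℤ) = m - N * (m / N) := Int.emod_def m N
        rw [this]
        push_cast
        field_simp
        ring
      show ((((m % N : ℤ) : ℝ) / N : ℝ) : AddCircle (1:ℝ)) = ((r : ℝ) : AddCircle (1:ℝ))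
      have hdiff : ((((m % N : ℤ) : ℝ) / N - r : ℝ) : AddCircle (1:ℝ)) = 0 := by
        rw [AddCircle.coe_eq_zero_iff]
        exact ⟨-((m / N : ℤ)), by rw [key]; simp⟩
      have := sub_eq_zero.mp (show ((((m % N : ℤ) : ℝ) / N : ℝ) : AddCircle (1:ℝ))
          - ((r : ℝ) : AddCircle (1:ℝ)) = 0 from by
        rw [← QuotientAddGroup.mk_sub]; exact hdiff)
      exact this
  exact (Set.Finite.image _ (Set.finite_Ico 0 (N:ℤ))).subset hsub

lemma torus_torsion_finite (n N : ℕ) (hN : N ≠ 0) :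
    {x : Fin n → AddCircle (1:ℝ) | N • x = 0}.Finite := by
  have : {x : Fin n → AddCircle (1:ℝ) | N • x = 0}
      ⊆ Set.pi Set.univ (fun _ : Fin n => {z : AddCircle (1:ℝ) | N • z = 0}) := by
    intro x hx i _
    have := congrFun hx i
    simpa using this
  exact (Set.Finite.pi (fun i => circle_torsion_finite N hN)).subset this

end

section
variable {n k : ℕ}

/-- The coordinatewise projection from ℝⁿ to the torus. -/
noncomputable def torusProj (y : Fin n → ℝ) : Fin n → AddCircle (1:ℝ) := fun i => (y i : AddCircle (1:ℝ))

lemma subtorusSet_eq_image_span (b : Fin k → (Fin n → ℤ)) :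
    subtorusSet b = torusProj ''
      (Submodule.span ℝ (Set.range fun i => fun l => ((b i l : ℝ))) : Set (Fin n → ℝ)) := by
  ext x
  constructor
  · rintro ⟨t, ht⟩
    refine ⟨fun i => ∑ j, t j * (b j i : ℝ), ?_, ?_⟩
    · rw [SetLike.mem_coe, Submodule.mem_span_range_iff_exists_fun]
      exact ⟨t, by funext l; rw [Finset.sum_apply]; simp [mul_comm]⟩
    · funext i
      exact (ht i).symm
  · rintro ⟨y, hy, rfl⟩
    rw [SetLike.mem_coe, Submodule.mem_span_range_iff_exists_fun] at hy
    obtain ⟨t, ht⟩ := hy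
    refine ⟨t, fun i => ?_⟩
    have : y i = ∑ j, t j * (b j i : ℝ) := by
      rw [← ht, Finset.sum_apply]; simp [mul_comm]
    rw [torusProj, this]

end

theorem finitely_many_small_subgroups (n k : ℕ) (hk : k ≤ n) (V : ℝ) (hV : 0 < V) :
    -- Part 1: if vol_k(T) · |H| ≤ V then vol_k(T) ≤ V and |H| ≤ V.
    (∀ (b : Fin k → (Fin n → ℤ)) (H : AddSubgroup (Fin n → AddCircle (1 : ℝ))),
      LinearIndependent ℤ b →
      (∀ (x : Fin n → ℤ) (m : ℤ), m ≠ 0 →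
        m • x ∈ Submodule.span ℤ (Set.range b) → x ∈ Submodule.span ℤ (Set.range b)) →
      ∀ hH : (H : Set (Fin n → AddCircle (1 : ℝ))).Finite,
        latticeCovol b * hH.toFinset.card ≤ V →
          latticeCovol b ≤ V ∧ (hH.toFinset.card : ℝ) ≤ V) ∧
    -- Part 2: there are only finitely many such subgroups Δ = T ⊕ H of volume at most V.
    {Δ : AddSubgroup (Fin n → AddCircle (1 : ℝ)) |
      ∃ (b : Fin k → (Fin n → ℤ)) (H : AddSubgroup (Fin n → AddCircle (1 : ℝ))),
        LinearIndependent ℤ b ∧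
        (∀ (x : Fin n → ℤ) (m : ℤ), m ≠ 0 →
          m • x ∈ Submodule.span ℤ (Set.range b) → x ∈ Submodule.span ℤ (Set.range b)) ∧
        ∃ hH : (H : Set (Fin n → AddCircle (1 : ℝ))).Finite,
          (Δ : Set (Fin n → AddCircle (1 : ℝ)))
              = {x | ∃ a ∈ subtorusSet b, ∃ h ∈ H, x = a + h} ∧
          subtorusSet b ∩ (H : Set (Fin n → AddCircle (1 : ℝ))) = {0} ∧
          latticeCovol b * hH.toFinset.card ≤ V}.Finite := by
  classical
  have part1 : ∀ (b : Fin k → (Fin n → ℤ)) (H : AddSubgroup (Fin n → AddCircle (1 : ℝ))),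
      LinearIndependent ℤ b →
      (∀ (x : Fin n → ℤ) (m : ℤ), m ≠ 0 →
        m • x ∈ Submodule.span ℤ (Set.range b) → x ∈ Submodule.span ℤ (Set.range b)) →
      ∀ hH : (H : Set (Fin n → AddCircle (1 : ℝ))).Finite,
        latticeCovol b * hH.toFinset.card ≤ V →
          latticeCovol b ≤ V ∧ (hH.toFinset.card : ℝ) ≤ V := by
    intro b H hli _ hH hbound
    have hc1 : 1 ≤ latticeCovol b := one_le_latticeCovol hli
    have hcardpos : 0 < hH.toFinset.card := by
      rw [Finset.card_pos]
      exact ⟨0, hH.mem_toFinset.mpr H.zero_mem⟩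
    have hcard1 : (1:ℝ) ≤ (hH.toFinset.card : ℝ) := by exact_mod_cast hcardpos
    constructor
    · calc latticeCovol b = latticeCovol b * 1 := (mul_one _).symm
        _ ≤ latticeCovol b * hH.toFinset.card :=
            mul_le_mul_of_nonneg_left hcard1 (by linarith)
        _ ≤ V := hbound
    · calc (hH.toFinset.card : ℝ) = 1 * hH.toFinset.card := (one_mul _).symm
        _ ≤ latticeCovol b * hH.toFinset.card :=
            mul_le_mul_of_nonneg_right hc1 (by linarith)
        _ ≤ V := hbound
  refine ⟨part1, ?_⟩
  set N0 := (⌊V⌋₊).factorial with hN0def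
  have hN0 : N0 ≠ 0 := Nat.factorial_ne_zero _
  have hStor : {x : Fin n → AddCircle (1:ℝ) | N0 • x = 0}.Finite := torus_torsion_finite n N0 hN0
  have hMfin : (Set.pi Set.univ
      (fun _ : Fin k → Fin n => Set.Icc (-(⌊V⌋ : ℤ)) ⌊V⌋)).Finite :=
    Set.Finite.pi (fun _ => Set.finite_Icc _ _)
  have hHsfin : {s : Set (Fin n → AddCircle (1:ℝ)) |
      s ⊆ {x : Fin n → AddCircle (1:ℝ) | N0 • x = 0}}.Finite := hStor.finite_subsets
  set G : ((Fin k → Fin n) → ℤ) × Set (Fin n → AddCircle (1:ℝ)) → Set (Fin n → AddCircle (1:ℝ)) :=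
    fun p => {x | ∃ a ∈ torusProj '' {y : Fin n → ℝ | ∀ g : Fin (k+1) → Fin n,
        (∑ j : Fin (k+1), (-1:ℝ)^(k + (j:ℕ)) * y (g j) *
          ((p.1 fun j' => g (Fin.succAbove j j')) : ℝ)) = 0},
      ∃ h ∈ p.2, x = a + h} with hGdef
  refine Set.Finite.of_finite_image ?_ (Set.injOn_of_injective SetLike.coe_injective)
  apply Set.Finite.subset ((hMfin.prod hHsfin).image G)
  rintro S ⟨Δ, hΔ, rfl⟩
  obtain ⟨b, H, hli, hsat, hH, hcar, hdisj, hbound⟩ := hΔ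
  obtain ⟨hcovV, hcardV⟩ := part1 b H hli hsat hH hbound
  set B : Fin k → Fin n → ℝ := fun i l => ((b i l : ℝ)) with hBdef
  have hBli : LinearIndependent ℝ B := li_real_of_li_int hli
  set μ : (Fin k → Fin n) → ℤ := fun g => (Matrix.of fun i j' : Fin k => b i (g j')).det with hμdef
  have hμcast : ∀ g : Fin k → Fin n,
      ((μ g : ℤ) : ℝ) = (Matrix.of fun i j' : Fin k => B i (g j')).det := by
    intro g
    have : (Matrix.of fun i j' : Fin k => B i (g j'))
        = (Int.castRingHom ℝ).mapMatrix (Matrix.of fun i j' : Fin k => b i (g j')) := by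
      ext i j; simp [hBdef]
    rw [this, ← RingHom.map_det]
    simp [hμdef]
  refine ⟨(μ, (H : Set (Fin n → AddCircle (1:ℝ)))), Set.mem_prod.mpr ⟨?_, ?_⟩, ?_⟩
  · -- μ has bounded entries
    intro g _
    simp only [Set.mem_Icc]
    have habs : |((μ g : ℤ) : ℝ)| ≤ V := by
      by_cases hginj : Function.Injective g
      · have hsq := minor_sq_le_gram B g hginj
        rw [← sq_latticeCovol hli] at hsq
        have hcpos : (0:ℝ) ≤ latticeCovol b := le_trans zero_le_one (one_le_latticeCovol hli)
        have habs' : |(Matrix.of fun i j' : Fin k => B i (g j')).det| ≤ latticeCovol b := by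
          rw [← Real.sqrt_sq_eq_abs]
          calc Real.sqrt (_ ^ 2) ≤ Real.sqrt (latticeCovol b ^ 2) := Real.sqrt_le_sqrt hsq
            _ = latticeCovol b := Real.sqrt_sq hcpos
        rw [hμcast g]
        exact le_trans habs' hcovV
      · have hzero : μ g = 0 := by
          rw [Function.not_injective_iff] at hginj
          obtain ⟨j1, j2, hgj, hne⟩ := hginj
          exact Matrix.det_zero_of_column_eq hne (fun i => by simp [hgj])
        rw [hzero]
        simpa using hV.le
    have habs2 : |μ g| ≤ ⌊V⌋ := Int.le_floor.mpr (by rw [Int.cast_abs]; exact habs)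
    exact abs_le.mp habs2
  · -- H is contained in the torsion set
    intro x hx
    show N0 • x = 0
    haveI : Finite ↥(H : Set (Fin n → AddCircle (1:ℝ))) := hH.to_subtype
    have hdvd1 : addOrderOf x ∣ Nat.card ↥H := AddSubgroup.addOrderOf_dvd_natCard H hx
    have hcardeq : Nat.card ↥H = hH.toFinset.card := by
      rw [← SetLike.coe_sort_coe, Nat.card_coe_set_eq, Set.ncard_eq_toFinset_card _ hH]
    have hcardpos : 0 < hH.toFinset.card := by
      rw [Finset.card_pos]
      exact ⟨0, hH.mem_toFinset.mpr H.zero_mem⟩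
    have hle : hH.toFinset.card ≤ ⌊V⌋₊ := Nat.le_floor hcardV
    have hdvd2 : Nat.card ↥H ∣ N0 := by
      rw [hcardeq, hN0def]
      exact Nat.dvd_factorial hcardpos hle
    exact addOrderOf_dvd_iff_nsmul_eq_zero.mp (hdvd1.trans hdvd2)
  · -- the carrier is recovered from the data
    rw [hcar]
    have hspan : {y : Fin n → ℝ | ∀ g : Fin (k+1) → Fin n,
        (∑ j : Fin (k+1), (-1:ℝ)^(k + (j:ℕ)) * y (g j) *
          ((μ fun j' => g (Fin.succAbove j j')) : ℝ)) = 0}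
        = (Submodule.span ℝ (Set.range B) : Set (Fin n → ℝ)) := by
      ext y
      rw [Set.mem_setOf_eq, SetLike.mem_coe, mem_span_iff_forms B hBli y]
      apply forall_congr'
      intro g
      have hsum : (∑ j : Fin (k+1), (-1:ℝ)^(k + (j:ℕ)) * y (g j) *
            ((μ fun j' => g (Fin.succAbove j j')) : ℝ))
          = ∑ j : Fin (k+1), (-1:ℝ)^(k + (j:ℕ)) * y (g j) *
            (Matrix.of fun i j' : Fin k => B i (g (Fin.succAbove j j'))).det :=
        Finset.sum_congr rfl fun j _ => by rw [hμcast]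
      rw [hsum]
    show G (μ, (H : Set (Fin n → AddCircle (1:ℝ))))
        = {x | ∃ a ∈ subtorusSet b, ∃ h ∈ H, x = a + h}
    rw [hGdef]
    simp only
    rw [hspan, ← subtorusSet_eq_image_span]
    rfl
end
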